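/- arXiv:1404.3309 — 7 statements merged into one kernel-verified Lean document; each statement's English description precedes it below -/
import Mathlib

section
/- Let K be a quantum channel on C^n with Kraus operators K_1,...,K_d and define F_min(K) = min over density matrices ρ of √(∑_i |Tr(ρ K_i)|²). If F_min(K) > 0, then F_min(K) = max over unit vectors v ∈ C^d of (1/2)λ_min(∑_i v_i K_i + (∑_i v_i K_i)†). -/
open Matrix
open scoped ComplexOrder

noncomputable section


lemma dot_conjT {n : ℕ} (A : Matrix (Fin n) (Fin n) ℂ) (x : Fin n → ℂ) :
    star x ⬝ᵥ Aᴴ *ᵥ x = star (star x ⬝ᵥ A *ᵥ x) := by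
  simp only [dotProduct, mulVec, conjTranspose_apply, dotProduct, Pi.star_apply,
    star_sum, star_mul', star_star, Finset.mul_sum]
  rw [Finset.sum_comm]
  congr 1; ext i; congr 1; ext j; ring

lemma trace_outer {n : ℕ} (A : Matrix (Fin n) (Fin n) ℂ) (x : Fin n → ℂ) :
    (vecMulVec x (star x) * A).trace = star x ⬝ᵥ A *ᵥ x := by
  simp only [trace, diag, mul_apply, vecMulVec_apply, dotProduct, mulVec, Pi.star_apply,
    Finset.mul_sum]
  rw [Finset.sum_comm]
  congr 1; ext i; congr 1; ext j; ring

lemma outer_posSemidef {n : ℕ} (x : Fin n → ℂ) : (vecMulVec x (star x)).PosSemidef := by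
  apply PosSemidef.of_dotProduct_mulVec_nonneg
  · ext i j
    simp [vecMulVec_apply, conjTranspose_apply, mul_comm]
  · intro y
    have : star y ⬝ᵥ (vecMulVec x (star x)) *ᵥ y
        = (star y ⬝ᵥ x) * star (star y ⬝ᵥ x) := by
      simp only [dotProduct, mulVec, vecMulVec_apply, Pi.star_apply, star_sum, star_mul',
        star_star, Finset.mul_sum, Finset.sum_mul]
      rw [Finset.sum_comm]
      congr 1; ext i; congr 1; ext j; ring
    rw [this]
    exact mul_star_self_nonneg _

lemma outer_trace {n : ℕ} (x : Fin n → ℂ) :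
    (vecMulVec x (star x)).trace = ((∑ i, ‖x i‖ ^ 2 : ℝ) : ℂ) := by
  simp only [trace, diag, vecMulVec_apply, Pi.star_apply]
  push_cast
  congr 1; ext i
  rw [show ((‖x i‖:ℝ):ℂ)^2 = ((‖x i‖ ^2 : ℝ):ℂ) by push_cast; ring,
    Complex.sq_norm, Complex.star_def, Complex.mul_conj]

lemma iInf_attained {n : ℕ} (hn : 0 < n) (f : Fin n → ℝ) : ∃ j0, (⨅ j, f j) = f j0 := by
  haveI : Nonempty (Fin n) := ⟨⟨0, hn⟩⟩
  obtain ⟨j0, -, hj0⟩ := Finset.exists_min_image Finset.univ f ⟨⟨0, hn⟩, Finset.mem_univ _⟩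
  exact ⟨j0, le_antisymm (ciInf_le (Finite.bddBelow_range f) j0)
    (le_ciInf fun j => hj0 j (Finset.mem_univ j))⟩

lemma smul_posSemidef {n : ℕ} {A : Matrix (Fin n) (Fin n) ℂ} (hA : A.PosSemidef)
    {t : ℝ} (ht : 0 ≤ t) : ((t : ℂ) • A).PosSemidef := by
  apply PosSemidef.of_dotProduct_mulVec_nonneg
  · unfold Matrix.IsHermitian
    rw [conjTranspose_smul, hA.1.eq]
    congr 1
    simp [Complex.ext_iff]
  · intro x
    rw [smul_mulVec, dotProduct_smul]
    exact smul_nonneg (by exact_mod_cast Complex.zero_le_real.mpr ht) (hA.dotProduct_mulVec_nonneg x)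

lemma trace_mul_conjT {n : ℕ} {ρ : Matrix (Fin n) (Fin n) ℂ} (hρ : ρ.IsHermitian)
    (M : Matrix (Fin n) (Fin n) ℂ) : (ρ * Mᴴ).trace = star ((ρ * M).trace) := by
  have : ρ * Mᴴ = (M * ρ)ᴴ := by rw [conjTranspose_mul, hρ.eq]
  rw [this, trace_conjTranspose, trace_mul_comm]

/-- Cauchy–Schwarz for complex sums. -/
lemma cs_sum {d : ℕ} (v a : Fin d → ℂ) :
    ‖∑ i, v i * a i‖ ≤
      Real.sqrt (∑ i, ‖v i‖ ^ 2) * Real.sqrt (∑ i, ‖a i‖ ^ 2) := by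
  let u : EuclideanSpace ℂ (Fin d) := WithLp.toLp 2 (fun i => star (v i))
  let w : EuclideanSpace ℂ (Fin d) := WithLp.toLp 2 a
  have hinner : (inner ℂ u w : ℂ) = ∑ i, v i * a i := by
    rw [PiLp.inner_apply]
    congr 1; ext i
    simp [u, w, RCLike.inner_apply, mul_comm]
  have hnu : ‖u‖ = Real.sqrt (∑ i, ‖v i‖ ^ 2) := by
    rw [EuclideanSpace.norm_eq]
    congr 1; apply Finset.sum_congr rfl; intro i _; simp [u]
  have hnw : ‖w‖ = Real.sqrt (∑ i, ‖a i‖ ^ 2) := by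
    simp [w, EuclideanSpace.norm_eq]
  calc ‖∑ i, v i * a i‖ = ‖(inner ℂ u w : ℂ)‖ := by rw [hinner]
    _ ≤ ‖u‖ * ‖w‖ := norm_inner_le_norm u w
    _ = _ := by rw [hnu, hnw]

lemma psd_diag_nonneg {n : ℕ} {σ : Matrix (Fin n) (Fin n) ℂ} (hσ : σ.PosSemidef) (j : Fin n) :
    0 ≤ σ j j := by
  have h := hσ.dotProduct_mulVec_nonneg (Pi.single j 1)
  have : star (Pi.single j 1 : Fin n → ℂ) ⬝ᵥ σ *ᵥ (Pi.single j 1 : Fin n → ℂ) = σ j j := by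
    have hs : star (Pi.single j 1 : Fin n → ℂ) = Pi.single j 1 := by
      ext k
      by_cases h : k = j <;> simp [h, Pi.single_apply]
    rw [hs, single_dotProduct]
    simp [Matrix.mulVec_single]
  rwa [this] at h

lemma trace_density_herm {n : ℕ} (hn : 0 < n) {H ρ : Matrix (Fin n) (Fin n) ℂ}
    (hH : H.IsHermitian) (hρ : ρ.PosSemidef) (hρ1 : ρ.trace = 1) :
    ((⨅ j, hH.eigenvalues j : ℝ) : ℂ) ≤ (ρ * H).trace := by
  haveI : Nonempty (Fin n) := ⟨⟨0, hn⟩⟩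
  set U : Matrix (Fin n) (Fin n) ℂ := (hH.eigenvectorUnitary : Matrix (Fin n) (Fin n) ℂ) with hUdef
  have hU : U * star U = 1 := Matrix.mem_unitaryGroup_iff.mp hH.eigenvectorUnitary.2
  set σ := star U * ρ * U with hσdef
  have hσ : σ.PosSemidef := by
    have := hρ.conjTranspose_mul_mul_same U
    rwa [← Matrix.star_eq_conjTranspose] at this
  have htr : σ.trace = 1 := by
    rw [hσdef, Matrix.trace_mul_cycle, hU, Matrix.one_mul, hρ1]
  have key : (ρ * H).trace = ∑ j, σ j j * (hH.eigenvalues j : ℂ) := by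
    conv_lhs => rw [hH.spectral_theorem, Unitary.conjStarAlgAut_apply]
    rw [show ρ * (U * diagonal (RCLike.ofReal ∘ hH.eigenvalues) * star U)
        = (ρ * U * diagonal (RCLike.ofReal ∘ hH.eigenvalues)) * star U by
      simp [Matrix.mul_assoc]]
    rw [Matrix.trace_mul_comm, ← Matrix.mul_assoc, ← Matrix.mul_assoc, ← hσdef]
    simp [Matrix.trace, Matrix.diag, Matrix.mul_diagonal]
  have hre : ∀ j, σ j j = ((σ j j).re : ℂ) := by
    intro j
    have := psd_diag_nonneg hσ j
    rw [Complex.nonneg_iff] at this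
    exact Complex.ext (by simp) (by simp [this.2])
  have hnn : ∀ j, 0 ≤ (σ j j).re := fun j => (Complex.nonneg_iff.mp (psd_diag_nonneg hσ j)).1
  have hsum : ∑ j, (σ j j).re = 1 := by
    have := congrArg Complex.re htr
    simpa [Matrix.trace, Matrix.diag, Complex.re_sum] using this
  rw [key]
  have : ∑ j, σ j j * (hH.eigenvalues j : ℂ)
      = ((∑ j, (σ j j).re * hH.eigenvalues j : ℝ) : ℂ) := by
    push_cast
    exact Finset.sum_congr rfl fun j _ => by rw [← hre j]
  rw [this]
  rw [Complex.real_le_real]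
  calc (⨅ j, hH.eigenvalues j) = ∑ j, (σ j j).re * (⨅ j, hH.eigenvalues j) := by
        rw [← Finset.sum_mul, hsum, one_mul]
    _ ≤ ∑ j, (σ j j).re * hH.eigenvalues j := by
        refine Finset.sum_le_sum fun j _ => ?_
        exact mul_le_mul_of_nonneg_left (ciInf_le (Finite.bddBelow_range _) j) (hnn j)


/-- `(K + Kᴴ)` is Hermitian. -/
theorem hermAdd {n : ℕ} (K : Matrix (Fin n) (Fin n) ℂ) : (K + Kᴴ).IsHermitian := by
  unfold Matrix.IsHermitian
  rw [conjTranspose_add, conjTranspose_conjTranspose, add_comm]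

/-- main theorem, nonzero-fidelity case: with
`F_min = min_ρ √(∑ i |Tr(ρ K i)|²)` over density matrices `ρ`, if `F_min > 0` then
`F_min = max_v (1/2) λ_min(∑ i v i K i + (∑ i v i K i)ᴴ)` over unit `v ∈ ℂ^d`. -/
theorem Fmin_eq_cos_time_energy_cost {n d : ℕ} (hn : 0 < n) (hd : 0 < d)
    (K : Fin d → Matrix (Fin n) (Fin n) ℂ)
    (hK : ∑ i, (K i)ᴴ * K i = 1)
    (Fmin : ℝ)
    (hF : IsLeast {x : ℝ | ∃ ρ : Matrix (Fin n) (Fin n) ℂ, ρ.PosSemidef ∧ ρ.trace = 1 ∧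
        x = Real.sqrt (∑ i, ‖(ρ * K i).trace‖ ^ 2)} Fmin)
    (hFpos : 0 < Fmin) :
    IsGreatest {x : ℝ | ∃ v : Fin d → ℂ, ∑ i, ‖v i‖ ^ 2 = 1 ∧
        x = (1/2) * ⨅ j, (hermAdd (∑ i, v i • K i)).eigenvalues j} Fmin := by
  obtain ⟨⟨ρ, hρP, hρ1, hFeq⟩, hlb⟩ := hF
  set a : Fin d → ℂ := fun i => (ρ * K i).trace with ha
  have ha' : ∀ i, a i = (ρ * K i).trace := fun _ => rfl
  have hS : ∑ i, ‖a i‖ ^ 2 = Fmin ^ 2 := by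
    rw [hFeq, Real.sq_sqrt (Finset.sum_nonneg fun i _ => sq_nonneg _)]
  have trace_sum_smul : ∀ (σ : Matrix (Fin n) (Fin n) ℂ) (v : Fin d → ℂ),
      (σ * ∑ i, v i • K i).trace = ∑ i, v i * (σ * K i).trace := by
    intro σ v
    rw [Matrix.mul_sum, trace_sum]
    exact Finset.sum_congr rfl fun i _ => by
      rw [Matrix.mul_smul, trace_smul, smul_eq_mul]
  have hUB : ∀ v : Fin d → ℂ, ∑ i, ‖v i‖ ^ 2 = 1 →
      (⨅ j, (hermAdd (∑ i, v i • K i)).eigenvalues j) ≤ 2 * Fmin := by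
    intro v hv
    set M := ∑ i, v i • K i with hM
    have h1 := trace_density_herm hn (hermAdd M) hρP hρ1
    have h1' : (⨅ j, (hermAdd M).eigenvalues j) ≤ ((ρ * (M + Mᴴ)).trace).re := by
      have := (Complex.le_def.mp h1).1
      simpa using this
    have h2 : (ρ * (M + Mᴴ)).trace = (ρ*M).trace + star ((ρ*M).trace) := by
      rw [Matrix.mul_add, trace_add, trace_mul_conjT hρP.1]
    have h3 : ((ρ * (M + Mᴴ)).trace).re = 2 * ((ρ*M).trace).re := by
      rw [h2]
      simp [Complex.add_re]
      ring
    have h4 : ((ρ*M).trace).re ≤ Fmin := by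
      have htr : (ρ*M).trace = ∑ i, v i * a i := trace_sum_smul ρ v
      calc ((ρ*M).trace).re ≤ ‖(ρ*M).trace‖ := Complex.re_le_norm _
        _ = ‖∑ i, v i * a i‖ := by rw [htr]
        _ ≤ Real.sqrt (∑ i, ‖v i‖^2) * Real.sqrt (∑ i, ‖a i‖^2) :=
            cs_sum v a
        _ = Fmin := by rw [hv, hS, Real.sqrt_one, one_mul, Real.sqrt_sq hFpos.le]
    linarith
  constructor
  · -- membership: construct the optimal v
    have hKKT : ∀ σ : Matrix (Fin n) (Fin n) ℂ, σ.PosSemidef → σ.trace = 1 →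
        Fmin ^ 2 ≤ (∑ i, star (a i) * (σ * K i).trace).re := by
      intro σ hσP hσ1
      set b : Fin d → ℂ := fun i => (σ * K i).trace - a i with hb
      have hb' : ∀ i, b i = (σ * K i).trace - a i := fun _ => rfl
      set c : ℝ := (∑ i, star (a i) * b i).re with hc
      set B : ℝ := ∑ i, ‖b i‖ ^ 2 with hB
      have hBnn : 0 ≤ B := Finset.sum_nonneg fun i _ => sq_nonneg _
      have hstep : ∀ t : ℝ, 0 < t → t ≤ 1 → 0 ≤ 2*c + t*B := by
        intro t ht ht1
        set ρt := ((1 - t : ℝ) : ℂ) • ρ + ((t:ℝ) : ℂ) • σ with hρt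
        have hρtP : ρt.PosSemidef :=
          (smul_posSemidef hρP (by linarith)).add (smul_posSemidef hσP ht.le)
        have hρt1 : ρt.trace = 1 := by
          rw [hρt, trace_add, trace_smul, trace_smul, hρ1, hσ1]
          simp only [smul_eq_mul, mul_one]
          push_cast
          ring
        have hmem : Fmin ≤ Real.sqrt (∑ i, ‖(ρt * K i).trace‖ ^ 2) :=
          hlb ⟨ρt, hρtP, hρt1, rfl⟩
        have hval : ∀ i, (ρt * K i).trace = a i + (t:ℂ) * b i := by
          intro i
          rw [hρt, Matrix.add_mul, trace_add, Matrix.smul_mul, Matrix.smul_mul,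
            trace_smul, trace_smul, hb' i, ha' i]
          simp only [smul_eq_mul]
          push_cast
          ring
        have hsq : Fmin^2 ≤ ∑ i, ‖a i + (t:ℂ)*b i‖^2 := by
          have h0 : 0 ≤ ∑ i, ‖(ρt * K i).trace‖^2 :=
            Finset.sum_nonneg fun i _ => sq_nonneg _
          have := (Real.le_sqrt hFpos.le h0).mp hmem
          calc Fmin^2 ≤ ∑ i, ‖(ρt * K i).trace‖^2 := this
            _ = ∑ i, ‖a i + (t:ℂ)*b i‖^2 :=
              Finset.sum_congr rfl fun i _ => by rw [hval i]
        have hexp : ∑ i, ‖a i + (t:ℂ)*b i‖^2 = Fmin^2 + 2*t*c + t^2*B := by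
          have hterm : ∀ i, ‖a i + (t:ℂ)*b i‖^2
              = ‖a i‖^2 + 2*t*(star (a i) * b i).re + t^2 * ‖b i‖^2 := by
            intro i
            rw [Complex.sq_norm, Complex.sq_norm, Complex.sq_norm]
            simp only [Complex.normSq_apply, Complex.add_re, Complex.add_im, Complex.mul_re,
              Complex.mul_im, Complex.ofReal_re, Complex.ofReal_im, RCLike.star_def,
              Complex.conj_re, Complex.conj_im]
            ring
          rw [Finset.sum_congr rfl fun i _ => hterm i]
          rw [Finset.sum_add_distrib, Finset.sum_add_distrib, hS]
          have e1 : ∑ i, 2*t*(star (a i) * b i).re = 2*t*c := by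
            rw [hc, Complex.re_sum, Finset.mul_sum]
          have e2 : ∑ i, t^2 * ‖b i‖^2 = t^2 * B := by
            rw [hB, Finset.mul_sum]
          rw [e1, e2]
        have h5 : 0 ≤ 2*t*c + t^2*B := by
          rw [hexp] at hsq
          linarith
        by_contra hcon
        push_neg at hcon
        nlinarith
      have hc0 : 0 ≤ c := by
        by_contra hcn
        push_neg at hcn
        rcases eq_or_lt_of_le hBnn with hB0 | hBpos
        · have := hstep 1 one_pos le_rfl
          rw [← hB0] at this
          linarith
        · have htpos : 0 < min 1 (-c/B) :=
            lt_min one_pos (div_pos (neg_pos.mpr hcn) hBpos)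
          have := hstep (min 1 (-c/B)) htpos (min_le_left _ _)
          have htB : (min 1 (-c/B)) * B ≤ -c := by
            have hle : min 1 (-c/B) ≤ -c/B := min_le_right _ _
            calc (min 1 (-c/B)) * B ≤ (-c/B) * B :=
                mul_le_mul_of_nonneg_right hle hBnn
              _ = -c := by field_simp
          linarith
      have hfinal : (∑ i, star (a i) * (σ * K i).trace).re = c + Fmin^2 := by
        have hsplit : ∀ i, star (a i) * (σ*K i).trace = star (a i) * b i + star (a i) * a i := by
          intro i
          rw [hb' i]
          ring
        rw [Finset.sum_congr rfl fun i _ => hsplit i, Finset.sum_add_distrib, Complex.add_re, hc]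
        congr 1
        rw [← hS, Complex.re_sum]
        refine Finset.sum_congr rfl fun i _ => ?_
        rw [Complex.sq_norm, RCLike.star_def]
        simp [Complex.normSq_apply, Complex.mul_re, Complex.conj_re, Complex.conj_im]
      linarith
    set v : Fin d → ℂ := fun i => star (a i) / (Fmin : ℂ) with hvdef
    have hv' : ∀ i, v i = star (a i) / (Fmin : ℂ) := fun _ => rfl
    have hFne : (Fmin : ℂ) ≠ 0 := Complex.ofReal_ne_zero.mpr hFpos.ne'
    have hvnorm : ∑ i, ‖v i‖ ^ 2 = 1 := by
      have hterm : ∀ i, ‖v i‖^2 = ‖a i‖^2 / Fmin^2 := by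
        intro i
        rw [hv' i, norm_div, div_pow]
        congr 2
        · rw [RCLike.star_def, Complex.norm_conj]
        · rw [Complex.norm_real, Real.norm_of_nonneg hFpos.le]
      rw [Finset.sum_congr rfl fun i _ => hterm i, ← Finset.sum_div, hS,
        div_self (pow_ne_zero 2 hFpos.ne')]
    refine ⟨v, hvnorm, ?_⟩
    set M := ∑ i, v i • K i with hM
    have hLB : 2 * Fmin ≤ ⨅ j, (hermAdd M).eigenvalues j := by
      obtain ⟨j0, hj0⟩ := iInf_attained hn (fun j => (hermAdd M).eigenvalues j)
      set x : Fin n → ℂ := ⇑((hermAdd M).eigenvectorBasis j0) with hx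
      have hxnorm : ∑ i, ‖x i‖^2 = 1 := by
        have h1 : ‖(hermAdd M).eigenvectorBasis j0‖ = 1 :=
          ((hermAdd M).eigenvectorBasis).orthonormal.1 j0
        rw [EuclideanSpace.norm_eq] at h1
        have h2 := Real.sqrt_eq_one.mp h1
        calc ∑ i, ‖x i‖^2 = ∑ i, ‖((hermAdd M).eigenvectorBasis j0) i‖^2 := by
              exact Finset.sum_congr rfl fun i _ => by rfl
          _ = 1 := h2
      set σx := vecMulVec x (star x) with hσx
      have hσxP : σx.PosSemidef := outer_posSemidef x
      have hσxtr : σx.trace = 1 := by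
        rw [hσx, outer_trace, hxnorm]
        norm_num
      have hKx := hKKT σx hσxP hσxtr
      have hrel : (∑ i, star (a i) * (σx * K i).trace) = (Fmin:ℂ) * (σx * M).trace := by
        rw [hM, trace_sum_smul σx v, Finset.mul_sum]
        refine Finset.sum_congr rfl fun i _ => ?_
        rw [hv' i]
        field_simp
      have hFleq : Fmin ≤ ((σx * M).trace).re := by
        have h6 : Fmin^2 ≤ Fmin * ((σx*M).trace).re := by
          rw [hrel] at hKx
          calc Fmin^2 ≤ ((Fmin:ℂ) * (σx * M).trace).re := hKx
            _ = Fmin * ((σx*M).trace).re := by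
              simp [Complex.mul_re]
        nlinarith
      have heig : (hermAdd M).eigenvalues j0 = 2 * ((σx * M).trace).re := by
        have he := (hermAdd M).eigenvalues_eq j0
        have hsplit : star x ⬝ᵥ (M + Mᴴ) *ᵥ x
            = (star x ⬝ᵥ M *ᵥ x) + star (star x ⬝ᵥ M *ᵥ x) := by
          rw [Matrix.add_mulVec, dotProduct_add, dot_conjT]
        have htr : (σx * M).trace = star x ⬝ᵥ M *ᵥ x := by
          rw [hσx, trace_outer]
        rw [he, htr]
        show (star x ⬝ᵥ (M + Mᴴ) *ᵥ x).re = _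
        rw [hsplit]
        simp [Complex.add_re, Complex.conj_re]
        ring
      rw [hj0, heig]
      linarith
    have hUBv := hUB v hvnorm
    rw [← hM] at hUBv
    have heq : (⨅ j, (hermAdd M).eigenvalues j) = 2 * Fmin := le_antisymm hUBv hLB
    rw [heq]
    ring
  · rintro y ⟨v, hv, rfl⟩
    have := hUB v hv
    linarith



end
end

section
/- Let K be a quantum channel on C^n with Kraus operators K_1,...,K_d, and let (ρ̃, w̃) be optimal for F_min(K) = min_ρ max_w |∑_i w_i Tr(ρ K_i)| with w̃_i = conj(Tr(ρ̃ K_i))/F_min(K) (assuming F_min(K) > 0). Then there is no unit vector ψ ∈ C^n with 0 ≤ Re(⟨ψ| ∑_i w̃_i K_i |ψ⟩) < F_min(K). -/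
open Matrix
open scoped ComplexOrder

noncomputable section

private lemma dot_sum_mulVec {n : ℕ} {ι : Type*} [DecidableEq ι] (s : Finset ι) (ψ : Fin n → ℂ)
    (M : ι → Matrix (Fin n) (Fin n) ℂ) :
    star ψ ⬝ᵥ (∑ i ∈ s, M i) *ᵥ ψ = ∑ i ∈ s, star ψ ⬝ᵥ (M i) *ᵥ ψ := by
  induction s using Finset.induction with
  | empty => simp
  | insert _ _ h ih => simp [Finset.sum_insert h, Matrix.add_mulVec, dotProduct_add, ih]

/-- Lemma 1: for an optimal density matrix `ρ̃` achieving
`F_min(𝒦) = min_ρ max_w |∑ i w i Tr(ρ K i)| = √(∑ i |Tr(ρ̃ K i)|²) > 0` and the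
optimal dual vector `w̃ i = conj (Tr(ρ̃ K i)) / F_min`, there is no unit vector
`ψ` with `0 ≤ Re⟨ψ|∑ i w̃ i K i|ψ⟩ < F_min(𝒦)`. -/
theorem no_state_below_Fmin {n d : ℕ} (hn : 0 < n) (hd : 0 < d)
    (K : Fin d → Matrix (Fin n) (Fin n) ℂ)
    (hK : ∑ i, (K i)ᴴ * K i = 1)
    (ρt : Matrix (Fin n) (Fin n) ℂ) (hρt : ρt.PosSemidef) (htr : ρt.trace = 1)
    (Fmin : ℝ)
    (hFval : Fmin = Real.sqrt (∑ i, ‖(ρt * K i).trace‖ ^ 2))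
    (hopt : ∀ ρ : Matrix (Fin n) (Fin n) ℂ, ρ.PosSemidef → ρ.trace = 1 →
      Fmin ≤ Real.sqrt (∑ i, ‖(ρ * K i).trace‖ ^ 2))
    (hFpos : 0 < Fmin)
    (wt : Fin d → ℂ)
    (hwt : ∀ i, wt i = starRingEnd ℂ ((ρt * K i).trace) / (Fmin : ℂ)) :
    ¬ ∃ ψ : Fin n → ℂ, star ψ ⬝ᵥ ψ = 1 ∧
        0 ≤ (star ψ ⬝ᵥ (∑ i, wt i • K i).mulVec ψ).re ∧
        (star ψ ⬝ᵥ (∑ i, wt i • K i).mulVec ψ).re < Fmin := by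
  rintro ⟨ψ, hψ, hz0, hzF⟩
  set c : Fin d → ℂ := fun i => (ρt * K i).trace with hc
  set b : Fin d → ℂ := fun i => star ψ ⬝ᵥ (K i).mulVec ψ with hb
  set z : ℂ := star ψ ⬝ᵥ (∑ i, wt i • K i).mulVec ψ with hzdef
  set P : Matrix (Fin n) (Fin n) ℂ := Matrix.vecMulVec ψ (star ψ) with hP
  -- basic facts about P
  have hPtrace : P.trace = 1 := by
    rw [← hψ]
    simp [hP, Matrix.trace, Matrix.vecMulVec_apply, dotProduct, mul_comm]
  have hPK : ∀ i, (P * K i).trace = b i := by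
    intro i
    simp only [hP, hb, Matrix.trace, Matrix.diag, Matrix.mul_apply,
      Matrix.vecMulVec_apply, dotProduct, Matrix.mulVec, Pi.star_apply]
    rw [Finset.sum_comm]
    refine Finset.sum_congr rfl fun k _ => ?_
    rw [Finset.mul_sum]
    refine Finset.sum_congr rfl fun j _ => ?_
    ring
  have hPherm : P.IsHermitian := by
    ext i j
    simp [hP, Matrix.conjTranspose_apply, Matrix.vecMulVec_apply, mul_comm]
  have hPpos : ∀ x : Fin n → ℂ, 0 ≤ star x ⬝ᵥ P.mulVec x := by
    intro x
    have : star x ⬝ᵥ P.mulVec x = star (star ψ ⬝ᵥ x) * (star ψ ⬝ᵥ x) := by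
      simp only [hP, dotProduct, Matrix.mulVec, Matrix.vecMulVec_apply, Pi.star_apply,
        Finset.mul_sum, Finset.sum_mul, star_sum, star_mul', star_star]
      rw [Finset.sum_comm]
      refine Finset.sum_congr rfl fun k _ => ?_
      refine Finset.sum_congr rfl fun j _ => ?_
      ring
    rw [this]
    exact star_mul_self_nonneg _
  -- identification of z
  have hFC : (Fmin : ℂ) ≠ 0 := by
    exact_mod_cast Complex.ofReal_ne_zero.mpr hFpos.ne'
  have hzsum : z = (∑ i, starRingEnd ℂ (c i) * b i) / (Fmin : ℂ) := by
    rw [hzdef, dot_sum_mulVec]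
    rw [Finset.sum_div]
    refine Finset.sum_congr rfl fun i _ => ?_
    rw [Matrix.smul_mulVec, dotProduct_smul, smul_eq_mul, hwt i]
    rw [div_mul_eq_mul_div]
  set S : ℂ := ∑ i, starRingEnd ℂ (c i) * b i with hS
  have hSre : S.re = Fmin * z.re := by
    have : S = z * (Fmin : ℂ) := by
      rw [hzsum]; field_simp
    rw [this, Complex.mul_re]
    simp [mul_comm]
  -- Fmin² = ∑ |c i|²
  have hA : Fmin ^ 2 = ∑ i, Complex.normSq (c i) := by
    have h1 : Fmin ^ 2 = ∑ i, ‖c i‖ ^ 2 := by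
      rw [hFval]
      exact Real.sq_sqrt (Finset.sum_nonneg fun i _ => sq_nonneg _)
    rw [h1]
    exact Finset.sum_congr rfl fun i _ => Complex.sq_norm _
  have hSsum : S.re = ∑ i, ((c i).re * (b i).re + (c i).im * (b i).im) := by
    rw [hS, Complex.re_sum]
    refine Finset.sum_congr rfl fun i _ => ?_
    simp [Complex.mul_re]
  -- the coefficients of the perturbation polynomial
  set L : ℝ := 2 * (S.re - Fmin ^ 2) with hL
  set Q : ℝ := ∑ i, Complex.normSq (b i - c i) with hQ
  have hQ0 : 0 ≤ Q := Finset.sum_nonneg fun i _ => Complex.normSq_nonneg _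
  have hLneg : L < 0 := by
    rw [hL, hSre]
    nlinarith [hzF, hFpos]
  set α : ℝ := min 1 ((-L) / (2 * (Q + 1))) with hα
  have hα0 : 0 < α := by
    apply lt_min one_pos
    apply div_pos (by linarith) (by linarith)
  have hα1 : α ≤ 1 := min_le_left _ _
  have hα2 : α ≤ (-L) / (2 * (Q + 1)) := min_le_right _ _
  have hLQ : L + Q * α < 0 := by
    have h1 : Q * α ≤ Q * ((-L) / (2 * (Q + 1))) :=
      mul_le_mul_of_nonneg_left hα2 hQ0
    have hβ0 : 0 ≤ (-L) / (2 * (Q + 1)) := div_nonneg (by linarith) (by linarith)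
    have hβmul : ((-L) / (2 * (Q + 1))) * (2 * (Q + 1)) = -L :=
      div_mul_cancel₀ _ (by positivity)
    nlinarith [h1, hβ0, hβmul]
  -- the perturbed state
  set ρα : Matrix (Fin n) (Fin n) ℂ :=
    ((1 - α : ℝ) : ℂ) • ρt + ((α : ℝ) : ℂ) • P with hρα
  have htrα : ρα.trace = 1 := by
    rw [hρα, Matrix.trace_add, Matrix.trace_smul, Matrix.trace_smul, htr, hPtrace]
    simp only [smul_eq_mul, mul_one]
    push_cast
    ring
  have hpsdα : ρα.PosSemidef := by
    rw [Matrix.posSemidef_iff_dotProduct_mulVec]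
    constructor
    · show ραᴴ = ρα
      rw [hρα, Matrix.conjTranspose_add, Matrix.conjTranspose_smul,
        Matrix.conjTranspose_smul, hρt.isHermitian.eq, hPherm.eq]
      simp [Complex.star_def, Complex.conj_ofReal]
    · intro x
      rw [hρα, Matrix.add_mulVec, Matrix.smul_mulVec, Matrix.smul_mulVec,
        dotProduct_add, dotProduct_smul, dotProduct_smul, smul_eq_mul, smul_eq_mul]
      have h1 : (0:ℂ) ≤ ((1 - α : ℝ) : ℂ) := by
        rw [Complex.zero_le_real]; linarith
      have h2 : (0:ℂ) ≤ ((α : ℝ) : ℂ) := by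
        rw [Complex.zero_le_real]; linarith
      exact add_nonneg (mul_nonneg h1 (hρt.dotProduct_mulVec_nonneg x)) (mul_nonneg h2 (hPpos x))
  have hραK : ∀ i, (ρα * K i).trace = ((1 - α : ℝ) : ℂ) * c i + ((α : ℝ) : ℂ) * b i := by
    intro i
    rw [hρα, Matrix.add_mul, Matrix.smul_mul, Matrix.smul_mul, Matrix.trace_add,
      Matrix.trace_smul, Matrix.trace_smul, hPK i, smul_eq_mul, smul_eq_mul]
  -- the value of the perturbed objective
  have hterm : ∀ i, ‖(ρα * K i).trace‖ ^ 2 =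
      Complex.normSq (c i)
      + 2 * α * ((c i).re * ((b i).re - (c i).re) + (c i).im * ((b i).im - (c i).im))
      + α ^ 2 * Complex.normSq (b i - c i) := by
    intro i
    rw [hραK i, Complex.sq_norm]
    simp only [Complex.normSq_apply, Complex.add_re, Complex.add_im, Complex.mul_re,
      Complex.mul_im, Complex.ofReal_re, Complex.ofReal_im, Complex.sub_re, Complex.sub_im]
    ring
  have hmid : ∑ i, ((c i).re * ((b i).re - (c i).re) + (c i).im * ((b i).im - (c i).im))
      = S.re - Fmin ^ 2 := by
    rw [hSsum, hA, ← Finset.sum_sub_distrib]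
    refine Finset.sum_congr rfl fun i _ => ?_
    simp only [Complex.normSq_apply]
    ring
  have hfval : ∑ i, ‖(ρα * K i).trace‖ ^ 2 = Fmin ^ 2 + α * (L + Q * α) := by
    rw [Finset.sum_congr rfl fun i _ => hterm i]
    rw [Finset.sum_add_distrib, Finset.sum_add_distrib, ← hA]
    rw [← Finset.mul_sum, ← Finset.mul_sum, hmid]
    rw [hL, hQ]
    ring
  have hflt : ∑ i, ‖(ρα * K i).trace‖ ^ 2 < Fmin ^ 2 := by
    rw [hfval]
    nlinarith
  have hge := hopt ρα hpsdα htrα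
  have hlt : Real.sqrt (∑ i, ‖(ρα * K i).trace‖ ^ 2) < Fmin := by
    have := Real.sqrt_lt_sqrt (Finset.sum_nonneg fun i _ => sq_nonneg _) hflt
    rwa [Real.sqrt_sq hFpos.le] at this
  linarith

end
end

section
/- Let K be a quantum channel on C^n with F_min(K) > 0 and w̃ the optimal unit vector. Then F_min(K) = min over unit vectors ψ ∈ C^n of Re(⟨ψ| ∑_i w̃_i K_i |ψ⟩) = (1/2)λ_min(∑_i w̃_i K_i + (∑_i w̃_i K_i)†). -/
open Matrix
open scoped ComplexOrder

noncomputable section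

lemma quadArg (A B : ℝ) (hB : 0 ≤ B) (h : ∀ p : ℝ, 0 < p → p ≤ 1 → 0 ≤ 2 * p * A + p ^ 2 * B) :
    0 ≤ A := by
  by_contra hA
  push_neg at hA
  rcases eq_or_lt_of_le hB with hB0 | hB0
  · have := h 1 one_pos le_rfl
    nlinarith
  · have hp : 0 < min 1 (-A / B) := lt_min one_pos (div_pos (neg_pos.2 hA) hB0)
    have h1 : min 1 (-A / B) ≤ 1 := min_le_left _ _
    have h2 : min 1 (-A / B) * B ≤ -A := by
      calc min 1 (-A / B) * B ≤ (-A / B) * B :=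
            mul_le_mul_of_nonneg_right (min_le_right _ _) hB
        _ = -A := by field_simp
    nlinarith [h _ hp h1]

lemma smul_psd {n : ℕ} (M : Matrix (Fin n) (Fin n) ℂ) (hM : M.PosSemidef) (r : ℝ) (hr : 0 ≤ r) :
    (((r:ℝ):ℂ) • M).PosSemidef := by
  constructor
  · unfold Matrix.IsHermitian
    rw [conjTranspose_smul, hM.1]
    norm_num
  · intro x
    exact (hM.smul (Complex.zero_le_real.2 hr)).2 x

lemma normSq_expand (z w : ℂ) (p : ℝ) :
    Complex.normSq (z + (p:ℂ) * w) =
      Complex.normSq z + 2 * p * ((starRingEnd ℂ z) * w).re + p ^ 2 * Complex.normSq w := by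
  simp [Complex.normSq_apply, Complex.add_re, Complex.add_im, Complex.mul_re, Complex.mul_im]
  ring

lemma key_ineq {n d : ℕ} (K : Fin d → Matrix (Fin n) (Fin n) ℂ)
    (ρt : Matrix (Fin n) (Fin n) ℂ) (hρt : ρt.PosSemidef) (htr : ρt.trace = 1)
    (Fmin : ℝ) (hFpos : 0 < Fmin)
    (hF2 : Fmin ^ 2 = ∑ i, ‖(ρt * K i).trace‖ ^ 2)
    (hopt : ∀ ρ : Matrix (Fin n) (Fin n) ℂ, ρ.PosSemidef → ρ.trace = 1 →
      Fmin ≤ Real.sqrt (∑ i, ‖(ρ * K i).trace‖ ^ 2))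
    (ρ : Matrix (Fin n) (Fin n) ℂ) (hρ : ρ.PosSemidef) (htrρ : ρ.trace = 1) :
    Fmin ^ 2 ≤ (∑ i, (starRingEnd ℂ ((ρt * K i).trace)) * (ρ * K i).trace).re := by
  set c : Fin d → ℂ := fun i => (ρt * K i).trace with hc
  set t : Fin d → ℂ := fun i => (ρ * K i).trace with ht
  set e : Fin d → ℂ := fun i => t i - c i with he
  set A : ℝ := (∑ i, (starRingEnd ℂ (c i)) * e i).re with hA
  set B : ℝ := ∑ i, Complex.normSq (e i) with hB
  have hcsq : ∑ i, Complex.normSq (c i) = Fmin ^ 2 := by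
    rw [hF2]
    exact Finset.sum_congr rfl fun i _ => (Complex.sq_norm _).symm
  have hq : ∀ p : ℝ, 0 < p → p ≤ 1 → 0 ≤ 2 * p * A + p ^ 2 * B := by
    intro p hp0 hp1
    set ρp : Matrix (Fin n) (Fin n) ℂ := (((1 - p : ℝ)):ℂ) • ρt + ((p:ℝ):ℂ) • ρ with hρp
    have hpsd : ρp.PosSemidef :=
      (smul_psd ρt hρt (1 - p) (by linarith)).add (smul_psd ρ hρ p (le_of_lt hp0))
    have htrp : ρp.trace = 1 := by
      rw [hρp, trace_add, trace_smul, trace_smul, htr, htrρ]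
      simp only [smul_eq_mul, mul_one]
      push_cast; ring
    have h1 := hopt ρp hpsd htrp
    have hS : ∑ i, ‖(ρp * K i).trace‖ ^ 2 = Fmin ^ 2 + (2 * p * A + p ^ 2 * B) := by
      have htri : ∀ i, (ρp * K i).trace = c i + (p:ℂ) * e i := by
        intro i
        rw [hρp, add_mul, smul_mul_assoc, smul_mul_assoc, trace_add, trace_smul, trace_smul]
        simp only [smul_eq_mul, he, ht, hc]
        push_cast; ring
      calc ∑ i, ‖(ρp * K i).trace‖ ^ 2
          = ∑ i, Complex.normSq (c i + (p:ℂ) * e i) := by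
            refine Finset.sum_congr rfl fun i _ => ?_
            rw [htri i, Complex.sq_norm]
        _ = ∑ i, (Complex.normSq (c i) + 2 * p * ((starRingEnd ℂ (c i)) * e i).re
              + p ^ 2 * Complex.normSq (e i)) :=
            Finset.sum_congr rfl fun i _ => normSq_expand _ _ _
        _ = Fmin ^ 2 + (2 * p * A + p ^ 2 * B) := by
            rw [Finset.sum_add_distrib, Finset.sum_add_distrib, hcsq, hA, hB,
              ← Finset.mul_sum, ← Finset.mul_sum, Complex.re_sum]
            ring
    rw [hS] at h1
    have hnn : 0 ≤ Fmin ^ 2 + (2 * p * A + p ^ 2 * B) := by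
      rw [← hS]
      exact Finset.sum_nonneg fun i _ => by positivity
    have := Real.sq_sqrt hnn
    nlinarith [h1, Real.sqrt_nonneg (Fmin ^ 2 + (2 * p * A + p ^ 2 * B))]
  have hA0 : 0 ≤ A := quadArg A B (Finset.sum_nonneg fun i _ => Complex.normSq_nonneg _) hq
  have : (∑ i, (starRingEnd ℂ (c i)) * t i).re = A + Fmin ^ 2 := by
    have : ∀ i, (starRingEnd ℂ (c i)) * t i = (starRingEnd ℂ (c i)) * e i + (Complex.normSq (c i) : ℂ) := by
      intro i
      have hei : e i = t i - c i := rfl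
      rw [hei, mul_sub, ← Complex.normSq_eq_conj_mul_self]
      ring
    rw [Finset.sum_congr rfl fun i _ => this i, Finset.sum_add_distrib, Complex.add_re, ← hA]
    have h2 : (∑ i, (Complex.normSq (c i) : ℂ)).re = Fmin ^ 2 := by
      rw [Complex.re_sum]
      simp only [Complex.ofReal_re]
      exact hcsq
    rw [h2]
  rw [this]
  linarith
/-- Lemma 3: for an optimal density matrix `ρ̃` achieving
`F_min(𝒦) = min_ρ max_w |∑ i w i Tr(ρ K i)| = √(∑ i |Tr(ρ̃ K i)|²) > 0` and the
optimal dual vector `w̃ i = conj (Tr(ρ̃ K i)) / F_min`, we have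
`F_min(𝒦) = min_{unit ψ} Re⟨ψ|∑ i w̃ i K i|ψ⟩ = (1/2) λ_min(∑ i w̃ i K i + (∑ i w̃ i K i)ᴴ)`. -/
theorem Fmin_eq_min_re_quadratic {n d : ℕ} (hn : 0 < n) (hd : 0 < d)
    (K : Fin d → Matrix (Fin n) (Fin n) ℂ)
    (hK : ∑ i, (K i)ᴴ * K i = 1)
    (ρt : Matrix (Fin n) (Fin n) ℂ) (hρt : ρt.PosSemidef) (htr : ρt.trace = 1)
    (Fmin : ℝ)
    (hFval : Fmin = Real.sqrt (∑ i, ‖(ρt * K i).trace‖ ^ 2))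
    (hopt : ∀ ρ : Matrix (Fin n) (Fin n) ℂ, ρ.PosSemidef → ρ.trace = 1 →
      Fmin ≤ Real.sqrt (∑ i, ‖(ρ * K i).trace‖ ^ 2))
    (hFpos : 0 < Fmin)
    (wt : Fin d → ℂ)
    (hwt : ∀ i, wt i = starRingEnd ℂ ((ρt * K i).trace) / (Fmin : ℂ)) :
    IsLeast {x : ℝ | ∃ ψ : Fin n → ℂ, star ψ ⬝ᵥ ψ = 1 ∧
        x = (star ψ ⬝ᵥ (∑ i, wt i • K i).mulVec ψ).re} Fmin ∧
    Fmin = (1/2) * ⨅ j, (hermAdd (∑ i, wt i • K i)).eigenvalues j := by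
  haveI : Nonempty (Fin n) := ⟨⟨0, hn⟩⟩
  have hF2 : Fmin ^ 2 = ∑ i, ‖(ρt * K i).trace‖ ^ 2 := by
    rw [hFval, Real.sq_sqrt (Finset.sum_nonneg fun i _ => by positivity)]
  set M : Matrix (Fin n) (Fin n) ℂ := ∑ i, wt i • K i with hM
  -- quadratic form values as traces
  have hform : ∀ ρ : Matrix (Fin n) (Fin n) ℂ,
      (ρ * M).trace = (∑ i, (starRingEnd ℂ ((ρt * K i).trace)) * (ρ * K i).trace) / (Fmin:ℂ) := by
    intro ρ
    rw [hM, Finset.mul_sum, trace_sum, Finset.sum_div]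
    refine Finset.sum_congr rfl fun i _ => ?_
    rw [mul_smul_comm, trace_smul, hwt i, smul_eq_mul]
    ring
  -- lower bound for unit vectors
  have lb : ∀ ψ : Fin n → ℂ, star ψ ⬝ᵥ ψ = 1 → Fmin ≤ (star ψ ⬝ᵥ M *ᵥ ψ).re := by
    intro ψ hψ
    set ρ : Matrix (Fin n) (Fin n) ℂ := vecMulVec ψ (star ψ) with hρdef
    have hρpsd : ρ.PosSemidef := by
      have : ρ = (replicateCol Unit ψ) * (replicateCol Unit ψ)ᴴ := by
        ext j k; simp [hρdef, vecMulVec_apply, Matrix.mul_apply, replicateCol, conjTranspose_apply]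
      rw [this]; exact posSemidef_self_mul_conjTranspose _
    have hρtr : ρ.trace = 1 := by
      rw [← hψ]; simp [hρdef, trace, diag, vecMulVec_apply, dotProduct, mul_comm]
    have htrK : ∀ A : Matrix (Fin n) (Fin n) ℂ, (ρ * A).trace = star ψ ⬝ᵥ A *ᵥ ψ := by
      intro A
      simp only [hρdef, trace, diag, Matrix.mul_apply, vecMulVec_apply, dotProduct, mulVec,
        Pi.star_apply]
      rw [Finset.sum_comm]
      refine Finset.sum_congr rfl fun j _ => ?_
      rw [Finset.mul_sum]
      refine Finset.sum_congr rfl fun k _ => ?_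
      ring
    have hkey := key_ineq K ρt hρt htr Fmin hFpos hF2 hopt ρ hρpsd hρtr
    have h1 : star ψ ⬝ᵥ M *ᵥ ψ = (ρ * M).trace := (htrK M).symm
    rw [h1, hform ρ, Complex.div_ofReal_re]
    rw [le_div_iff₀ hFpos]
    have htfix : ∀ i, (ρ * K i).trace = (ρ * K i).trace := fun _ => rfl
    calc Fmin * Fmin = Fmin ^ 2 := by ring
      _ ≤ _ := hkey
  -- value at ρt
  have hvalρt : ((ρt * M).trace).re = Fmin := by
    rw [hform ρt, Complex.div_ofReal_re, Complex.re_sum]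
    have : ∀ i, ((starRingEnd ℂ ((ρt * K i).trace)) * (ρt * K i).trace).re
        = ‖(ρt * K i).trace‖ ^ 2 := by
      intro i
      rw [← Complex.normSq_eq_conj_mul_self, Complex.sq_norm, Complex.ofReal_re]
    rw [Finset.sum_congr rfl fun i _ => this i, ← hF2]
    field_simp
  -- spectral data
  have hH := hermAdd M
  obtain ⟨j₀, hj₀⟩ := Finite.exists_min hH.eigenvalues
  have hinf : ⨅ j, hH.eigenvalues j = hH.eigenvalues j₀ :=
    le_antisymm (ciInf_le (Finite.bddBelow_range _) j₀) (le_ciInf hj₀)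
  set ψ₀ : Fin n → ℂ := ⇑(hH.eigenvectorBasis j₀) with hψ₀
  have hψ₀unit : star ψ₀ ⬝ᵥ ψ₀ = 1 := by
    have hnorm := hH.eigenvectorBasis.orthonormal.1 j₀
    have h1 : (inner ℂ (hH.eigenvectorBasis j₀) (hH.eigenvectorBasis j₀) : ℂ) = 1 := by
      rw [@inner_self_eq_norm_sq_to_K ℂ, hnorm]; norm_num
    rw [← h1, PiLp.inner_apply]
    simp [dotProduct, RCLike.inner_apply, hψ₀, Complex.conj_mul']
  have hsplit : ∀ ψ : Fin n → ℂ,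
      star ψ ⬝ᵥ (M + Mᴴ) *ᵥ ψ
        = (star ψ ⬝ᵥ M *ᵥ ψ) + starRingEnd ℂ (star ψ ⬝ᵥ M *ᵥ ψ) := by
    intro ψ
    rw [add_mulVec, dotProduct_add]
    congr 1
    simp only [dotProduct, mulVec, conjTranspose_apply, Pi.star_apply, map_sum,
      Finset.mul_sum, starRingEnd_apply]
    rw [Finset.sum_comm]
    refine Finset.sum_congr rfl fun j _ => Finset.sum_congr rfl fun k _ => ?_
    simp only [star_mul', star_star]
    ring
  have hRay : star ψ₀ ⬝ᵥ (M + Mᴴ) *ᵥ ψ₀ = ((hH.eigenvalues j₀ : ℝ) : ℂ) := by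
    rw [hψ₀, hH.mulVec_eigenvectorBasis]
    rw [dotProduct_smul]
    rw [← hψ₀, hψ₀unit]
    simp [Complex.real_smul]
  have hval₀ : hH.eigenvalues j₀ = 2 * (star ψ₀ ⬝ᵥ M *ᵥ ψ₀).re := by
    have h := hRay
    rw [hsplit ψ₀, Complex.add_conj] at h
    exact_mod_cast h.symm
  -- upper bound: eigenvalue ≤ 2 * Fmin via the trace
  have htraceH : ((ρt * (M + Mᴴ)).trace).re = 2 * Fmin := by
    rw [Matrix.mul_add, trace_add]
    have hconj : (ρt * Mᴴ).trace = starRingEnd ℂ ((ρt * M).trace) := by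
      rw [starRingEnd_apply, ← trace_conjTranspose, conjTranspose_mul, hρt.1, trace_mul_comm]
    rw [hconj, Complex.add_re, Complex.conj_re, hvalρt]
    ring
  set U : Matrix (Fin n) (Fin n) ℂ := (hH.eigenvectorUnitary : Matrix (Fin n) (Fin n) ℂ) with hU
  have hQpsd : (star U * ρt * U).PosSemidef := by
    have := hρt.conjTranspose_mul_mul_same U
    rwa [← star_eq_conjTranspose] at this
  have hUU : U * star U = 1 := mem_unitaryGroup_iff.mp (hH.eigenvectorUnitary).2
  have hQtr : (star U * ρt * U).trace = 1 := by
    rw [trace_mul_cycle, hUU, one_mul, htr]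
  have hdiagQ : ∀ j, ∃ q : ℝ, 0 ≤ q ∧ (star U * ρt * U) j j = (q : ℂ) := by
    intro j
    have h := hQpsd.dotProduct_mulVec_nonneg (Pi.single j 1)
    have he : star (Pi.single j (1:ℂ)) ⬝ᵥ (star U * ρt * U) *ᵥ Pi.single j 1
        = (star U * ρt * U) j j := by
      rw [mulVec_single]
      simp [dotProduct, Pi.single_apply, Finset.sum_eq_single j, apply_ite]
    rw [he] at h
    rw [Complex.nonneg_iff] at h
    exact ⟨((star U * ρt * U) j j).re, h.1, by
      rw [Complex.ext_iff]; constructor <;> simp [← h.2]⟩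
  choose q hq0 hqeq using hdiagQ
  have hqsum : ∑ j, q j = 1 := by
    have : (star U * ρt * U).trace = ((∑ j, q j : ℝ) : ℂ) := by
      rw [trace]
      push_cast
      exact Finset.sum_congr rfl fun j _ => hqeq j
    rw [hQtr] at this
    exact_mod_cast this.symm
  have htraceQ : ((ρt * (M + Mᴴ)).trace).re = ∑ j, hH.eigenvalues j * q j := by
    have hspec := hH.spectral_theorem
    have h1 : (ρt * (M + Mᴴ)).trace
        = ((star U * ρt * U) * diagonal (RCLike.ofReal ∘ hH.eigenvalues)).trace := by
      conv_lhs => rw [hspec, Unitary.conjStarAlgAut_apply]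
      rw [← hU, ← mul_assoc, ← mul_assoc, trace_mul_comm, ← mul_assoc, mul_assoc]
      rw [← mul_assoc, ← mul_assoc]
    rw [h1, trace]
    rw [Complex.re_sum]
    refine Finset.sum_congr rfl fun j _ => ?_
    rw [diag_apply, mul_diagonal, hqeq j]
    simp [mul_comm]
  have hub : hH.eigenvalues j₀ ≤ 2 * Fmin := by
    rw [← htraceH, htraceQ]
    calc hH.eigenvalues j₀ = ∑ j, hH.eigenvalues j₀ * q j := by
          rw [← Finset.mul_sum, hqsum, mul_one]
      _ ≤ ∑ j, hH.eigenvalues j * q j :=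
          Finset.sum_le_sum fun j _ => mul_le_mul_of_nonneg_right (hj₀ j) (hq0 j)
  have hlb2 : 2 * Fmin ≤ hH.eigenvalues j₀ := by
    rw [hval₀]
    have := lb ψ₀ hψ₀unit
    linarith
  have heig : hH.eigenvalues j₀ = 2 * Fmin := le_antisymm hub hlb2
  constructor
  · constructor
    · exact ⟨ψ₀, hψ₀unit, by linarith [hval₀, heig]⟩
    · rintro x ⟨ψ, hψ, rfl⟩
      exact lb ψ hψ
  · rw [hinf, heig]
    ring

end
end

section
/- For the quantum depolarizing channel K_D(ρ) = qρ + (1−q)I/n with 0 ≤ q ≤ 1, the minimum entanglement fidelity F_min(K_D) = min over density matrices ρ of √(∑_i |Tr(ρ K_i)|²) (for any Kraus representation {K_i} of K_D) equals √(q + (1−q)/n²). -/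
open Matrix
open scoped ComplexOrder

noncomputable section

lemma depol_entry {n d : ℕ} (q : ℝ)
    (K : Fin d → Matrix (Fin n) (Fin n) ℂ)
    (hrep : ∀ ρ : Matrix (Fin n) (Fin n) ℂ,
      ∑ i, K i * ρ * (K i)ᴴ = (q : ℂ) • ρ + ((((1 - q) / n : ℝ) : ℂ) * ρ.trace) • 1)
    (b d' a c : Fin n) :
    (∑ i, K i a b * (starRingEnd ℂ) (K i c d')) =
      (q:ℂ) * ((if a = b then 1 else 0) * (if c = d' then 1 else 0)) +
      (((1-q)/n : ℝ):ℂ) * ((if b = d' then 1 else 0) * (if a = c then 1 else 0)) := by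
  have h := congrFun (congrFun (hrep (Matrix.single b d' 1)) a) c
  simp only [Matrix.sum_apply, Matrix.mul_apply, Matrix.single, conjTranspose_apply,
    Matrix.trace, Matrix.diag, Matrix.add_apply, Matrix.smul_apply, Matrix.one_apply,
    Matrix.of_apply, ite_and, smul_eq_mul] at h
  simp only [Finset.sum_ite_eq, Finset.sum_ite_eq', Finset.mem_univ, if_true,
    mul_ite, ite_mul, mul_one, mul_zero, one_mul, zero_mul, Finset.sum_ite_irrel,
    Finset.sum_const_zero] at h ⊢
  simp only [starRingEnd_apply]
  rw [h]
  by_cases h1 : a = b <;> by_cases h2 : c = d' <;> by_cases h3 : b = d' <;> by_cases h4 : a = c <;>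
    simp_all <;> simp_all [eq_comm]

lemma depol_key {n d : ℕ} (q : ℝ)
    (K : Fin d → Matrix (Fin n) (Fin n) ℂ)
    (hrep : ∀ ρ : Matrix (Fin n) (Fin n) ℂ,
      ∑ i, K i * ρ * (K i)ᴴ = (q : ℂ) • ρ + ((((1 - q) / n : ℝ) : ℂ) * ρ.trace) • 1)
    (ρ : Matrix (Fin n) (Fin n) ℂ) :
    (∑ i, ‖(ρ * K i).trace‖ ^ 2) =
      q * Complex.normSq ρ.trace + (1 - q) / n * ∑ a, ∑ b, Complex.normSq (ρ a b) := by
  have hT : ∀ i, (ρ * K i).trace = ∑ p : Fin n × Fin n, ρ p.1 p.2 * K i p.2 p.1 := by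
    intro i
    simp [Matrix.trace, Matrix.diag, Matrix.mul_apply, Fintype.sum_prod_type]
  have hC : ∑ i, ((ρ * K i).trace * (starRingEnd ℂ) ((ρ * K i).trace)) =
      (q:ℂ) * (ρ.trace * (starRingEnd ℂ) ρ.trace) +
      (((1-q)/n : ℝ):ℂ) * ∑ p : Fin n × Fin n, ρ p.1 p.2 * (starRingEnd ℂ) (ρ p.1 p.2) := by
    calc ∑ i, ((ρ * K i).trace * (starRingEnd ℂ) ((ρ * K i).trace))
        = ∑ i, ∑ p : Fin n × Fin n, ∑ r : Fin n × Fin n,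
            (ρ p.1 p.2 * (starRingEnd ℂ) (ρ r.1 r.2)) *
              (K i p.2 p.1 * (starRingEnd ℂ) (K i r.2 r.1)) := by
          refine Finset.sum_congr rfl fun i _ => ?_
          rw [hT, map_sum, Finset.sum_mul_sum]
          exact Finset.sum_congr rfl fun p _ => Finset.sum_congr rfl fun r _ => by
            rw [_root_.map_mul]; ring
      _ = ∑ p : Fin n × Fin n, ∑ r : Fin n × Fin n,
            (ρ p.1 p.2 * (starRingEnd ℂ) (ρ r.1 r.2)) *
              ∑ i, (K i p.2 p.1 * (starRingEnd ℂ) (K i r.2 r.1)) := by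
          rw [Finset.sum_comm]
          refine Finset.sum_congr rfl fun p _ => ?_
          rw [Finset.sum_comm]
          exact Finset.sum_congr rfl fun r _ => (Finset.mul_sum _ _ _).symm
      _ = (∑ p : Fin n × Fin n, ∑ r : Fin n × Fin n,
            (ρ p.1 p.2 * (starRingEnd ℂ) (ρ r.1 r.2)) *
            ((q:ℂ) * ((if p.2 = p.1 then 1 else 0) * (if r.2 = r.1 then 1 else 0)))) +
          (∑ p : Fin n × Fin n, ∑ r : Fin n × Fin n,
            (ρ p.1 p.2 * (starRingEnd ℂ) (ρ r.1 r.2)) *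
            ((((1-q)/n : ℝ):ℂ) * ((if p.1 = r.1 then 1 else 0) * (if p.2 = r.2 then 1 else 0)))) := by
          rw [← Finset.sum_add_distrib]
          refine Finset.sum_congr rfl fun p _ => ?_
          rw [← Finset.sum_add_distrib]
          refine Finset.sum_congr rfl fun r _ => ?_
          rw [depol_entry q K hrep p.1 r.1 p.2 r.2, mul_add]
      _ = (q:ℂ) * (ρ.trace * (starRingEnd ℂ) ρ.trace) +
          (((1-q)/n : ℝ):ℂ) * ∑ p : Fin n × Fin n, ρ p.1 p.2 * (starRingEnd ℂ) (ρ p.1 p.2) := by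
          congr 1
          · simp only [Fintype.sum_prod_type, mul_ite, ite_mul, mul_zero, zero_mul,
              mul_one, one_mul, Finset.sum_ite_eq, Finset.sum_ite_eq', Finset.mem_univ,
              if_true, Finset.sum_ite_irrel, Finset.sum_const_zero]
            rw [Matrix.trace]
            simp only [Matrix.diag, map_sum, Finset.mul_sum, Finset.sum_mul]
            rw [Finset.sum_comm]
            refine Finset.sum_congr rfl fun a _ => Finset.sum_congr rfl fun c _ => by ring
          · simp only [Fintype.sum_prod_type, mul_ite, ite_mul, mul_zero, zero_mul,
              mul_one, one_mul, Finset.sum_ite_eq, Finset.sum_ite_eq', Finset.mem_univ,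
              if_true, Finset.sum_ite_irrel, Finset.sum_const_zero, Finset.mul_sum]
            refine Finset.sum_congr rfl fun a _ => Finset.sum_congr rfl fun c _ => by ring
  have h2 : (∑ i, Complex.normSq ((ρ * K i).trace) : ℝ) =
      q * Complex.normSq ρ.trace + (1-q)/n * ∑ p : Fin n × Fin n, Complex.normSq (ρ p.1 p.2) := by
    simp only [Complex.mul_conj] at hC
    exact_mod_cast hC
  simp only [Complex.sq_norm]
  rw [h2, Fintype.sum_prod_type]

/-- for any Kraus representation `{K i}` of the depolarizing
channel `𝒦_D(ρ) = qρ + (1−q)I/n` with `0 ≤ q ≤ 1`, the minimum entanglement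
fidelity `min_ρ √(∑ i |Tr(ρ K i)|²)` over density matrices equals
`√(q + (1−q)/n²)`. -/
theorem depolarizing_Fmin {n d : ℕ} (hn : 0 < n) (hd : 0 < d)
    (q : ℝ) (hq0 : 0 ≤ q) (hq1 : q ≤ 1)
    (K : Fin d → Matrix (Fin n) (Fin n) ℂ)
    (hK : ∑ i, (K i)ᴴ * K i = 1)
    (hrep : ∀ ρ : Matrix (Fin n) (Fin n) ℂ,
      ∑ i, K i * ρ * (K i)ᴴ = (q : ℂ) • ρ + ((((1 - q) / n : ℝ) : ℂ) * ρ.trace) • 1) :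
    IsLeast {x : ℝ | ∃ ρ : Matrix (Fin n) (Fin n) ℂ, ρ.PosSemidef ∧ ρ.trace = 1 ∧
        x = Real.sqrt (∑ i, ‖(ρ * K i).trace‖ ^ 2)}
      (Real.sqrt (q + (1 - q) / n ^ 2)) := by
  have hnR : (0:ℝ) < (n:ℝ) := by exact_mod_cast hn
  constructor
  · -- membership with ρ = n⁻¹ • 1
    refine ⟨(n:ℂ)⁻¹ • (1 : Matrix (Fin n) (Fin n) ℂ), ?_, ?_, ?_⟩
    · refine Matrix.PosSemidef.one.smul ?_
      rw [show ((n:ℂ))⁻¹ = (((n:ℝ)⁻¹ : ℝ) : ℂ) by push_cast; ring]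
      rw [Complex.zero_le_real]
      positivity
    · rw [Matrix.trace_smul, Matrix.trace_one, smul_eq_mul, Fintype.card_fin, inv_mul_cancel₀]
      exact_mod_cast hnR.ne'
    · rw [depol_key q K hrep]
      have htr : ((n:ℂ)⁻¹ • (1 : Matrix (Fin n) (Fin n) ℂ)).trace = 1 := by
        rw [Matrix.trace_smul, Matrix.trace_one, smul_eq_mul, Fintype.card_fin, inv_mul_cancel₀]
        exact_mod_cast hnR.ne'
      rw [htr]
      have hsum : (∑ a, ∑ b, Complex.normSq (((n:ℂ)⁻¹ • (1 : Matrix (Fin n) (Fin n) ℂ)) a b)) =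
          (n:ℝ)⁻¹ := by
        have : ∀ a b : Fin n, Complex.normSq (((n:ℂ)⁻¹ • (1 : Matrix (Fin n) (Fin n) ℂ)) a b) =
            if a = b then ((n:ℝ)⁻¹)^2 else 0 := by
          intro a b
          by_cases h : a = b <;>
            simp [h, Matrix.smul_apply, Matrix.one_apply, Complex.normSq_inv, Complex.normSq_natCast, sq]
        simp only [this, Finset.sum_ite_eq, Finset.sum_ite_eq', Finset.mem_univ, if_true]
        rw [Finset.sum_const, Finset.card_univ, Fintype.card_fin, nsmul_eq_mul, sq]
        field_simp
      rw [hsum]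
      congr 1
      rw [Complex.normSq_one]
      field_simp
  · -- lower bound
    rintro x ⟨ρ, hpsd, htr, rfl⟩
    apply Real.sqrt_le_sqrt
    rw [depol_key q K hrep, htr, Complex.normSq_one, mul_one]
    have hkey : (1:ℝ) ≤ (n:ℝ) * ∑ a, ∑ b, Complex.normSq (ρ a b) := by
      have h1 : ‖ρ.trace‖ ≤ ∑ a, ‖ρ a a‖ := by
        rw [Matrix.trace]
        exact norm_sum_le _ _
      have h2 : (∑ a, ‖ρ a a‖)^2 ≤ (n:ℝ) * ∑ a, ‖ρ a a‖ ^ 2 := by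
        have := sq_sum_le_card_mul_sum_sq (s := (Finset.univ : Finset (Fin n)))
          (f := fun a => ‖ρ a a‖)
        simpa using this
      have h3 : ∑ a, ‖ρ a a‖ ^ 2 ≤ ∑ a, ∑ b, Complex.normSq (ρ a b) := by
        refine Finset.sum_le_sum fun a _ => ?_
        rw [Complex.sq_norm]
        exact Finset.single_le_sum (f := fun b => Complex.normSq (ρ a b))
          (fun b _ => Complex.normSq_nonneg _) (Finset.mem_univ a)
      have h0 : ‖ρ.trace‖ = 1 := by rw [htr]; simp
      calc (1:ℝ) = ‖ρ.trace‖ ^ 2 := by rw [h0]; ring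
        _ ≤ (∑ a, ‖ρ a a‖)^2 := by
            exact pow_le_pow_left₀ (norm_nonneg _) h1 2
        _ ≤ (n:ℝ) * ∑ a, ‖ρ a a‖ ^ 2 := h2
        _ ≤ (n:ℝ) * ∑ a, ∑ b, Complex.normSq (ρ a b) :=
            mul_le_mul_of_nonneg_left h3 hnR.le
    have hc : (0:ℝ) ≤ (1 - q) / n := div_nonneg (by linarith) hnR.le
    have : (1-q) / n^2 ≤ (1-q)/n * ∑ a, ∑ b, Complex.normSq (ρ a b) := by
      have : (1:ℝ)/n ≤ ∑ a, ∑ b, Complex.normSq (ρ a b) := by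
        rw [div_le_iff₀ hnR]
        linarith [hkey]
      calc (1-q)/n^2 = (1-q)/n * (1/n) := by ring
        _ ≤ (1-q)/n * ∑ a, ∑ b, Complex.normSq (ρ a b) :=
            mul_le_mul_of_nonneg_left this hc
    linarith
end
end

section
/- Let U ∈ C^{n×n} be unitary with eigenvalues e^{iθ_j}, |θ_j| ≤ π/2. Then the minimum entanglement fidelity of the unitary channel ρ ↦ UρU†, namely min over density matrices ρ of |Tr(ρU)|, equals cos((θ_max − θ_min)/2). -/
open Matrix
open scoped ComplexOrder

noncomputable section

/-- for unitary `U` with eigenvalues `e^{iθ_j}`, `|θ_j| ≤ π/2`, the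
minimum entanglement fidelity of the unitary channel `ρ ↦ UρUᴴ`, i.e.
`min_ρ |Tr(ρU)|` over density matrices, equals `cos((θ_max − θ_min)/2)`. -/
theorem unitary_channel_Fmin {n : ℕ} (hn : 0 < n)
    (U V : Matrix (Fin n) (Fin n) ℂ) (θ : Fin n → ℝ)
    (hU : U ∈ Matrix.unitaryGroup (Fin n) ℂ)
    (hV : V ∈ Matrix.unitaryGroup (Fin n) ℂ)
    (hdiag : U = V * Matrix.diagonal (fun j => Complex.exp ((θ j : ℂ) * Complex.I)) * Vᴴ)
    (hθ : ∀ j, |θ j| ≤ Real.pi / 2) :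
    IsLeast {x : ℝ | ∃ ρ : Matrix (Fin n) (Fin n) ℂ, ρ.PosSemidef ∧ ρ.trace = 1 ∧
        x = ‖(ρ * U).trace‖}
      (Real.cos (((⨆ j, θ j) - ⨅ j, θ j) / 2)) := by
  haveI : NeZero n := ⟨hn.ne'⟩
  have hVV : Vᴴ * V = 1 := by
    have := Matrix.mem_unitaryGroup_iff'.mp hV
    simpa [Matrix.star_eq_conjTranspose] using this
  have hVV' : V * Vᴴ = 1 := by
    have := Matrix.mem_unitaryGroup_iff.mp hV
    simpa [Matrix.star_eq_conjTranspose] using this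
  set a := ⨆ j, θ j with ha
  set b := ⨅ j, θ j with hb
  set w := (a - b) / 2 with hw
  set c := (a + b) / 2 with hc
  obtain ⟨jM, hjM⟩ := exists_eq_ciSup_of_finite (f := θ)
  obtain ⟨jm, hjm⟩ := exists_eq_ciInf_of_finite (f := θ)
  have haj : ∀ j, θ j ≤ a := fun j => le_ciSup (Set.finite_range θ).bddAbove j
  have hbj : ∀ j, b ≤ θ j := fun j => ciInf_le (Set.finite_range θ).bddBelow j
  have ha2 : a ≤ Real.pi / 2 := by rw [ha, ← hjM]; exact (abs_le.mp (hθ jM)).2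
  have hb2 : -(Real.pi / 2) ≤ b := by rw [hb, ← hjm]; exact (abs_le.mp (hθ jm)).1
  have hba : b ≤ a := (hbj jM).trans (haj jM)
  have hw0 : 0 ≤ w := by rw [hw]; linarith
  have hwpi : w ≤ Real.pi / 2 := by rw [hw]; linarith
  have hpi : 0 < Real.pi := Real.pi_pos
  have hcos0 : 0 ≤ Real.cos w := Real.cos_nonneg_of_mem_Icc ⟨by linarith, hwpi⟩
  set D : Matrix (Fin n) (Fin n) ℂ :=
    Matrix.diagonal (fun j => Complex.exp ((θ j : ℂ) * Complex.I)) with hD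
  -- trace formula
  have htrace : ∀ ρ : Matrix (Fin n) (Fin n) ℂ,
      (ρ * U).trace = ∑ j, (Vᴴ * ρ * V) j j * Complex.exp ((θ j : ℂ) * Complex.I) := by
    intro ρ
    rw [hdiag]
    have h1 : ρ * (V * D * Vᴴ) = (ρ * V * D) * Vᴴ := by
      simp only [Matrix.mul_assoc]
    rw [h1, Matrix.trace_mul_comm, show Vᴴ * (ρ * V * D) = (Vᴴ * ρ * V) * D by
      simp only [Matrix.mul_assoc]]
    simp [Matrix.trace, Matrix.diag, Matrix.mul_diagonal, hD]
  -- exp identity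
  have hexp : Complex.exp ((a : ℂ) * Complex.I) + Complex.exp ((b : ℂ) * Complex.I)
      = Complex.exp ((c : ℂ) * Complex.I) * (2 * (Real.cos w : ℂ)) := by
    have hA : (a : ℂ) = (c : ℂ) + (w : ℂ) := by
      have : a = c + w := by rw [hc, hw]; ring
      exact_mod_cast congrArg (Complex.ofReal) this
    have hB : (b : ℂ) = (c : ℂ) - (w : ℂ) := by
      have : b = c - w := by rw [hc, hw]; ring
      exact_mod_cast congrArg (Complex.ofReal) this
    rw [hA, hB, add_mul, sub_mul, Complex.exp_add, sub_eq_add_neg, Complex.exp_add,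
      ← neg_mul, Complex.ofReal_cos]
    rw [Complex.exp_mul_I, Complex.exp_mul_I, Complex.exp_mul_I, Complex.cos_neg,
      Complex.sin_neg]
    ring
  constructor
  · -- membership: the optimal state
    classical
    set d : Fin n → ℝ := fun j =>
      (if j = jM then (1:ℝ)/2 else 0) + (if j = jm then (1:ℝ)/2 else 0) with hd
    have hd0 : ∀ j, 0 ≤ d j := by
      intro j
      rw [hd]
      refine add_nonneg ?_ ?_ <;> split <;> norm_num
    set Dd : Matrix (Fin n) (Fin n) ℂ := Matrix.diagonal (fun j => (d j : ℂ)) with hDd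
    refine ⟨V * Dd * Vᴴ, ?_, ?_, ?_⟩
    · exact (Matrix.PosSemidef.diagonal fun j =>
        Complex.zero_le_real.mpr (hd0 j)).mul_mul_conjTranspose_same V
    · rw [Matrix.trace_mul_cycle, show Vᴴ * V * Dd = Dd by rw [hVV, Matrix.one_mul]]
      rw [hDd, Matrix.trace_diagonal]
      rw [← Complex.ofReal_sum]
      norm_cast
      rw [hd]
      rw [Finset.sum_add_distrib]
      simp [Finset.sum_ite_eq']
      norm_num
    · rw [htrace]
      have hmid : Vᴴ * (V * Dd * Vᴴ) * V = Dd := by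
        have : Vᴴ * (V * Dd * Vᴴ) * V = (Vᴴ * V) * (Dd * (Vᴴ * V)) := by
          simp only [Matrix.mul_assoc]
        rw [this, hVV, Matrix.one_mul, Matrix.mul_one]
      rw [hmid, hDd]
      have hsum : ∑ j, (Matrix.diagonal (fun j => (d j : ℂ))) j j
            * Complex.exp ((θ j : ℂ) * Complex.I)
          = ((1:ℂ)/2) * Complex.exp ((a : ℂ) * Complex.I)
            + ((1:ℂ)/2) * Complex.exp ((b : ℂ) * Complex.I) := by
        simp only [Matrix.diagonal_apply_eq, hd, Complex.ofReal_add,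
          apply_ite (Complex.ofReal), Complex.ofReal_div, Complex.ofReal_one,
          Complex.ofReal_zero, add_mul, Finset.sum_add_distrib, ite_mul, zero_mul]
        rw [Finset.sum_ite_eq' Finset.univ jM, Finset.sum_ite_eq' Finset.univ jm]
        simp only [Finset.mem_univ, if_true, hjM, hjm, ← ha, ← hb]
        norm_num
      rw [hsum, show ((1:ℂ)/2) * Complex.exp ((a : ℂ) * Complex.I)
            + ((1:ℂ)/2) * Complex.exp ((b : ℂ) * Complex.I)
          = Complex.exp ((c : ℂ) * Complex.I) * (Real.cos w : ℂ) by
        rw [show Complex.exp ((c : ℂ) * Complex.I) * (Real.cos w : ℂ)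
            = ((1:ℂ)/2) * (Complex.exp ((c : ℂ) * Complex.I) * (2 * (Real.cos w : ℂ))) by ring,
          ← hexp]; ring]
      rw [norm_mul, Complex.norm_exp_ofReal_mul_I, Complex.norm_real, one_mul,
        Real.norm_of_nonneg hcos0]
  · -- lower bound
    rintro x ⟨ρ, hρ, hρ1, rfl⟩
    set A := Vᴴ * ρ * V with hAdef
    have hA : A.PosSemidef := hρ.conjTranspose_mul_mul_same V
    have hdg : ∀ j, 0 ≤ A j j := fun j => hA.diag_nonneg
    set p : Fin n → ℝ := fun j => (A j j).re with hp
    have hp0 : ∀ j, 0 ≤ p j := fun j => (Complex.nonneg_iff.mp (hdg j)).1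
    have hAp : ∀ j, A j j = (p j : ℂ) := by
      intro j
      have him := (Complex.nonneg_iff.mp (hdg j)).2
      apply Complex.ext
      · simp [hp]
      · simp [hp, ← him]
    have hsum : ∑ j, p j = 1 := by
      have htr : A.trace = 1 := by
        rw [hAdef, Matrix.trace_mul_cycle, show V * Vᴴ * ρ = ρ by rw [hVV', Matrix.one_mul],
          hρ1]
      have : ∑ j, (p j : ℂ) = 1 := by
        rw [← htr, Matrix.trace]
        exact (Finset.sum_congr rfl fun j _ => (hAp j).symm)
      exact_mod_cast this
    have hTr : (ρ * U).trace = ∑ j, (p j : ℂ) * Complex.exp ((θ j : ℂ) * Complex.I) := by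
      rw [htrace ρ]
      exact Finset.sum_congr rfl fun j _ => by rw [← hAdef, hAp]
    have hre : (Complex.exp ((-c : ℝ) * Complex.I) * (ρ * U).trace).re
        = ∑ j, p j * Real.cos (θ j - c) := by
      rw [hTr, Finset.mul_sum, Complex.re_sum]
      refine Finset.sum_congr rfl fun j _ => ?_
      have hterm : Complex.exp (((-c : ℝ)) * Complex.I)
            * ((p j : ℂ) * Complex.exp ((θ j : ℂ) * Complex.I))
          = (p j : ℂ) * Complex.exp (((θ j - c : ℝ) : ℂ) * Complex.I) := by
        rw [show (((θ j - c : ℝ)) : ℂ) * Complex.I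
            = ((θ j : ℂ)) * Complex.I + ((-c : ℝ) : ℂ) * Complex.I by push_cast; ring,
          Complex.exp_add]
        ring
      rw [hterm, Complex.re_ofReal_mul, Complex.exp_ofReal_mul_I_re]
    have hcos : ∀ j, Real.cos w ≤ Real.cos (θ j - c) := by
      intro j
      have h1 : |θ j - c| ≤ w := by
        rw [abs_le]
        constructor
        · have := hbj j; linarith
        · have := haj j; linarith
      rw [← Real.cos_abs (θ j - c)]
      exact Real.cos_le_cos_of_nonneg_of_le_pi (abs_nonneg _) (by linarith) h1
    have hlow : Real.cos w ≤ ∑ j, p j * Real.cos (θ j - c) := by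
      calc Real.cos w = ∑ j, p j * Real.cos w := by
            rw [← Finset.sum_mul, hsum, one_mul]
        _ ≤ ∑ j, p j * Real.cos (θ j - c) :=
            Finset.sum_le_sum fun j _ => mul_le_mul_of_nonneg_left (hcos j) (hp0 j)
    calc Real.cos w ≤ (Complex.exp ((-c : ℝ) * Complex.I) * (ρ * U).trace).re := by
          rw [hre]; exact hlow
      _ ≤ ‖Complex.exp ((-c : ℝ) * Complex.I) * (ρ * U).trace‖ :=
          Complex.re_le_norm _
      _ = ‖(ρ * U).trace‖ := by
          rw [norm_mul, Complex.norm_exp_ofReal_mul_I, one_mul]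

end
end

section
/- Let U = exp(−iHt/ℏ) for a Hermitian matrix H with eigenvalues E_j, and suppose |E_j t/ℏ| ≤ π/2 for all j. If some unit vector ψ satisfies |⟨ψ|U|ψ⟩| = F, then t ≥ 2ℏ arccos(F)/(E_max − E_min), where E_max, E_min are the largest and smallest eigenvalues of H. -/
open Matrix

noncomputable section

private lemma teur_key {ι : Type*} [Fintype ι] (p : ι → ℝ) (hp : ∀ j, 0 ≤ p j)
    (hsum : ∑ j, p j = 1) (θ : ι → ℝ) (φ Δ : ℝ)
    (hcos : ∀ j, Real.cos Δ ≤ Real.cos (φ - θ j)) :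
    Real.cos Δ ≤ ‖∑ j, Complex.exp (-(θ j : ℝ) * Complex.I) * ((p j : ℝ) : ℂ)‖ := by
  set z : ℂ := ∑ j, Complex.exp (-(θ j : ℝ) * Complex.I) * ((p j : ℝ) : ℂ) with hz
  have h1 : (Complex.exp ((φ : ℝ) * Complex.I) * z).re = ∑ j, p j * Real.cos (φ - θ j) := by
    rw [hz, Finset.mul_sum, Complex.re_sum]
    refine Finset.sum_congr rfl fun j _ => ?_
    have h2 : Complex.exp ((φ : ℝ) * Complex.I) * (Complex.exp (-(θ j : ℝ) * Complex.I)
        * ((p j : ℝ) : ℂ)) = ((p j : ℝ) : ℂ) * Complex.exp (((φ - θ j : ℝ)) * Complex.I) := by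
      rw [← mul_assoc, ← Complex.exp_add]
      push_cast
      ring_nf
    rw [h2, Complex.re_ofReal_mul, Complex.exp_ofReal_mul_I_re]
  calc Real.cos Δ = ∑ j, p j * Real.cos Δ := by
        rw [← Finset.sum_mul, hsum, one_mul]
    _ ≤ ∑ j, p j * Real.cos (φ - θ j) :=
        Finset.sum_le_sum fun j _ => mul_le_mul_of_nonneg_left (hcos j) (hp j)
    _ = (Complex.exp ((φ : ℝ) * Complex.I) * z).re := h1.symm
    _ ≤ ‖Complex.exp ((φ : ℝ) * Complex.I) * z‖ := Complex.re_le_norm _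
    _ = ‖z‖ := by rw [norm_mul, Complex.norm_exp_ofReal_mul_I, one_mul]

/-- TEUR for the fastest state: let `U = exp(−iHt/ℏ)` with `H`
Hermitian, eigen-energies `E_j` satisfying `|E_j t/ℏ| ≤ π/2`.  If a unit vector
`ψ` has `|⟨ψ|U|ψ⟩| = F` then `t ≥ 2ℏ arccos(F)/(E_max − E_min)`. -/
theorem time_energy_uncertainty {n : ℕ} (hn : 0 < n)
    (H : Matrix (Fin n) (Fin n) ℂ) (hH : H.IsHermitian)
    (t ℏ : ℝ) (ht : 0 < t) (hℏ : 0 < ℏ)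
    (hE : ∀ j, |hH.eigenvalues j * t / ℏ| ≤ Real.pi / 2)
    (U : Matrix (Fin n) (Fin n) ℂ)
    (hU : U = NormedSpace.exp ((-(Complex.I * (t / ℏ : ℝ))) • H))
    (ψ : Fin n → ℂ) (hψ : star ψ ⬝ᵥ ψ = 1)
    (F : ℝ) (hF : ‖star ψ ⬝ᵥ U.mulVec ψ‖ = F) :
    t ≥ 2 * ℏ * Real.arccos F / ((⨆ j, hH.eigenvalues j) - ⨅ j, hH.eigenvalues j) := by
  have hne : Nonempty (Fin n) := ⟨⟨0, hn⟩⟩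
  set E : Fin n → ℝ := hH.eigenvalues with hEdef
  set θ : Fin n → ℝ := fun j => E j * t / ℏ with hθdef
  set Emax : ℝ := ⨆ j, E j with hEmax
  set Emin : ℝ := ⨅ j, E j with hEmin
  set V : Matrix (Fin n) (Fin n) ℂ := (hH.eigenvectorUnitary : Matrix (Fin n) (Fin n) ℂ) with hV
  have hVmem : V ∈ Matrix.unitaryGroup (Fin n) ℂ := hH.eigenvectorUnitary.2
  have hVsV : V * star V = 1 := (Matrix.mem_unitaryGroup_iff).mp hVmem
  have hVinv : V⁻¹ = star V := Matrix.inv_eq_right_inv hVsV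
  have hVunit : IsUnit V := (Matrix.isUnit_iff_isUnit_det V).mpr (Matrix.isUnit_det_of_right_inverse hVsV)
  -- diagonalize U
  have h1 : (-(Complex.I * ((t / ℏ : ℝ) : ℂ))) • H
      = V * Matrix.diagonal (fun j => (-(θ j : ℝ) * Complex.I : ℂ)) * star V := by
    conv_lhs => rw [hH.spectral_theorem]
    rw [Unitary.conjStarAlgAut_apply]
    rw [← smul_mul_assoc, ← mul_smul_comm]
    congr 1
    congr 1
    ext i j
    by_cases h : i = j
    · subst h
      simp only [Matrix.smul_apply, Matrix.diagonal_apply_eq, Function.comp_apply,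
        smul_eq_mul, hθdef, hEdef]
      push_cast
      ring_nf
      rfl
    · simp [Matrix.diagonal_apply_ne _ h]
  have hUeq : U = V * Matrix.diagonal (fun j => Complex.exp (-(θ j : ℝ) * Complex.I)) * star V := by
    rw [hU, h1, ← hVinv, Matrix.exp_conj _ _ hVunit, Matrix.exp_diagonal, Pi.exp_def]
    simp only [← Complex.exp_eq_exp_ℂ]
  -- the vector in the eigenbasis
  set c : Fin n → ℂ := star V *ᵥ ψ with hcdef
  have hstarc : star c = star ψ ᵥ* V := by
    rw [hcdef, Matrix.star_mulVec, Matrix.star_eq_conjTranspose,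
      Matrix.conjTranspose_conjTranspose]
  set p : Fin n → ℝ := fun j => Complex.normSq (c j) with hpdef
  have hp : ∀ j, 0 ≤ p j := fun j => Complex.normSq_nonneg _
  have hcp : star c ⬝ᵥ c = 1 := by
    rw [hstarc, ← Matrix.dotProduct_mulVec, Matrix.mulVec_mulVec, hVsV, Matrix.one_mulVec, hψ]
  have hdot : star c ⬝ᵥ c = ((∑ j, p j : ℝ) : ℂ) := by
    rw [dotProduct]
    push_cast
    refine Finset.sum_congr rfl fun j _ => ?_
    rw [Pi.star_apply, Complex.star_def, ← Complex.normSq_eq_conj_mul_self]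
  have hpsum : ∑ j, p j = 1 := by
    have h3 : ((∑ j, p j : ℝ) : ℂ) = 1 := hdot ▸ hcp
    exact_mod_cast h3
  -- the amplitude as a weighted sum of phases
  have hzval : star ψ ⬝ᵥ U *ᵥ ψ
      = ∑ j, Complex.exp (-(θ j : ℝ) * Complex.I) * ((p j : ℝ) : ℂ) := by
    rw [hUeq, ← Matrix.mulVec_mulVec, ← Matrix.mulVec_mulVec, Matrix.dotProduct_mulVec,
      ← hstarc, dotProduct]
    refine Finset.sum_congr rfl fun j _ => ?_
    rw [Matrix.mulVec_diagonal, Pi.star_apply, Complex.star_def, hpdef]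
    rw [show ((Complex.normSq (c j) : ℝ) : ℂ)
        = (starRingEnd ℂ) (c j) * c j from Complex.normSq_eq_conj_mul_self]
    ring
  -- bounds on eigenvalues
  have hle1 : ∀ j, E j ≤ Emax := fun j => le_ciSup (Set.Finite.bddAbove (Set.finite_range E)) j
  have hle2 : ∀ j, Emin ≤ E j := fun j => ciInf_le (Set.Finite.bddBelow (Set.finite_range E)) j
  have hEm : Emin ≤ Emax := (hle2 ⟨0, hn⟩).trans (hle1 ⟨0, hn⟩)
  set Δ : ℝ := (Emax - Emin) * t / (2 * ℏ) with hΔdef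
  set φ : ℝ := (Emax + Emin) * t / (2 * ℏ) with hφdef
  have htℏ : 0 < t / ℏ := div_pos ht hℏ
  have hΔ0 : 0 ≤ Δ := by
    apply div_nonneg (mul_nonneg (by linarith) ht.le) (by linarith)
  have hΔhalf : Δ ≤ Real.pi / 2 := by
    obtain ⟨jx, hjx⟩ := exists_eq_ciSup_of_finite (f := E)
    obtain ⟨jm, hjm⟩ := exists_eq_ciInf_of_finite (f := E)
    have hx := abs_le.mp (hE jx)
    have hm := abs_le.mp (hE jm)
    have hΔeq : Δ = (θ jx - θ jm) / 2 := by
      simp only [hΔdef, hθdef, hEmax, hEmin, ← hjx, ← hjm]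
      field_simp
    rw [hΔeq]
    simp only [hθdef]
    linarith [hx.2, hm.1]
  have hΔpi : Δ ≤ Real.pi := hΔhalf.trans (by linarith [Real.pi_pos])
  have hcos : ∀ j, Real.cos Δ ≤ Real.cos (φ - θ j) := by
    intro j
    have e1 : φ - Δ = Emin * (t / ℏ) := by
      rw [hφdef, hΔdef]; field_simp; ring
    have e2 : φ + Δ = Emax * (t / ℏ) := by
      rw [hφdef, hΔdef]; field_simp; ring
    have e3 : θ j = E j * (t / ℏ) := by rw [hθdef]; ring
    have b1 : Emin * (t / ℏ) ≤ E j * (t / ℏ) :=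
      mul_le_mul_of_nonneg_right (hle2 j) htℏ.le
    have b2 : E j * (t / ℏ) ≤ Emax * (t / ℏ) :=
      mul_le_mul_of_nonneg_right (hle1 j) htℏ.le
    have habs : |φ - θ j| ≤ Δ := abs_le.mpr ⟨by linarith, by linarith⟩
    calc Real.cos Δ ≤ Real.cos |φ - θ j| :=
          Real.cos_le_cos_of_nonneg_of_le_pi (abs_nonneg _) hΔpi habs
      _ = Real.cos (φ - θ j) := Real.cos_abs _
  -- main inequality
  have hFc : Real.cos Δ ≤ F := by
    rw [← hF, hzval]
    exact teur_key p hp hpsum θ φ Δ hcos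
  have harc : Real.arccos F ≤ Δ := by
    have h4 : Real.arcsin (Real.cos Δ) ≤ Real.arcsin F := Real.monotone_arcsin hFc
    have h5 : Real.arccos (Real.cos Δ) = Δ := Real.arccos_cos hΔ0 hΔpi
    rw [Real.arccos] at h5 ⊢
    linarith
  -- conclude
  rcases eq_or_lt_of_le (sub_nonneg.mpr hEm) with h0 | hpos
  · rw [ge_iff_le, ← h0, div_zero]
    exact ht.le
  · rw [ge_iff_le, div_le_iff₀ hpos]
    have h6 : 2 * ℏ * Δ = t * (Emax - Emin) := by
      rw [hΔdef]; field_simp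
    nlinarith [mul_le_mul_of_nonneg_left harc (by linarith : (0:ℝ) ≤ 2 * ℏ)]

end
end

section
/- Let H be a Hermitian matrix with eigenvalues E_max and E_min as extremes, and suppose ⟨ψ|exp(−iHt/ℏ)|ψ⟩ = 0 for some unit vector ψ with |E_j t/ℏ| ≤ π/2 for all eigenvalues E_j. Then t ≥ πℏ/(E_max − E_min), with equality achievable by an equal superposition of the extreme-energy eigenvectors. -/
open Matrix

noncomputable section

lemma herm_exp_form {n : ℕ} (H : Matrix (Fin n) (Fin n) ℂ) (hH : H.IsHermitian) (c : ℂ) :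
    NormedSpace.exp (c • H) =
      (hH.eigenvectorUnitary : Matrix (Fin n) (Fin n) ℂ) *
        Matrix.diagonal (fun j => Complex.exp (c * hH.eigenvalues j)) *
        star (hH.eigenvectorUnitary : Matrix (Fin n) (Fin n) ℂ) := by
  set U : Matrix (Fin n) (Fin n) ℂ := (hH.eigenvectorUnitary : Matrix (Fin n) (Fin n) ℂ) with hUdef
  have hU : IsUnit U := (Unitary.toUnits hH.eigenvectorUnitary).isUnit
  have hUinv : U⁻¹ = star U := by
    apply Matrix.inv_eq_left_inv
    exact Unitary.coe_star_mul_self hH.eigenvectorUnitary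
  have hspec : c • H = U * Matrix.diagonal (fun j => c * (hH.eigenvalues j : ℂ)) * U⁻¹ := by
    rw [hUinv]
    conv_lhs => rw [hH.spectral_theorem, Unitary.conjStarAlgAut_apply]
    rw [show c • ((hH.eigenvectorUnitary : Matrix (Fin n) (Fin n) ℂ) * diagonal (RCLike.ofReal ∘ hH.eigenvalues) * star (hH.eigenvectorUnitary : Matrix (Fin n) (Fin n) ℂ)) = ((hH.eigenvectorUnitary : Matrix (Fin n) (Fin n) ℂ) * (c • diagonal (RCLike.ofReal ∘ hH.eigenvalues)) * star (hH.eigenvectorUnitary : Matrix (Fin n) (Fin n) ℂ)) by rw [Matrix.mul_smul, Matrix.smul_mul]]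
    congr 2
    ext i j
    by_cases h : i = j <;> simp [h, Matrix.diagonal, Function.comp]
  rw [hspec, Matrix.exp_conj _ _ hU, Matrix.exp_diagonal, hUinv]
  congr 2
  rw [Pi.exp_def]
  congr 1
  ext j
  rw [← Complex.exp_eq_exp_ℂ]

lemma quad_form {n : ℕ} (H : Matrix (Fin n) (Fin n) ℂ) (hH : H.IsHermitian) (c : ℂ)
    (ψ : Fin n → ℂ) :
    star ψ ⬝ᵥ (NormedSpace.exp (c • H)).mulVec ψ =
      ∑ j, Complex.exp (c * hH.eigenvalues j) *
        (Complex.normSq ((star (hH.eigenvectorUnitary : Matrix (Fin n) (Fin n) ℂ)).mulVec ψ j) : ℂ) := by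
  set U : Matrix (Fin n) (Fin n) ℂ := (hH.eigenvectorUnitary : Matrix (Fin n) (Fin n) ℂ) with hUdef
  set φ : Fin n → ℂ := (star U).mulVec ψ with hφ
  have hstar : star ψ ᵥ* U = star φ := by
    rw [hφ, Matrix.star_mulVec, Matrix.star_eq_conjTranspose, conjTranspose_conjTranspose]
  rw [herm_exp_form H hH c, ← Matrix.mulVec_mulVec, ← Matrix.mulVec_mulVec,
    Matrix.dotProduct_mulVec, hstar]
  simp only [Matrix.mulVec_diagonal, dotProduct]
  congr 1
  ext j
  rw [Complex.normSq_eq_conj_mul_self]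
  push_cast
  simp [hφ, Pi.star_apply, RCLike.star_def]
  ring

lemma norm_form {n : ℕ} (H : Matrix (Fin n) (Fin n) ℂ) (hH : H.IsHermitian)
    (ψ : Fin n → ℂ) :
    star ψ ⬝ᵥ ψ =
      ∑ j, (Complex.normSq ((star (hH.eigenvectorUnitary : Matrix (Fin n) (Fin n) ℂ)).mulVec ψ j) : ℂ) := by
  set U : Matrix (Fin n) (Fin n) ℂ := (hH.eigenvectorUnitary : Matrix (Fin n) (Fin n) ℂ) with hUdef
  set φ : Fin n → ℂ := (star U).mulVec ψ with hφ
  have hstar : star ψ ᵥ* U = star φ := by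
    rw [hφ, Matrix.star_mulVec, Matrix.star_eq_conjTranspose, conjTranspose_conjTranspose]
  have h1 : star φ ⬝ᵥ φ = star ψ ⬝ᵥ ψ := by
    rw [← hstar, hφ, Matrix.dotProduct_mulVec, Matrix.vecMul_vecMul]
    have hone : U * star U = 1 := by
      simpa [hUdef, Unitary.coe_star] using Unitary.coe_mul_star_self hH.eigenvectorUnitary
    rw [hone, Matrix.vecMul_one]
  rw [← h1]
  simp only [dotProduct]
  congr 1
  ext j
  rw [Complex.normSq_eq_conj_mul_self]
  push_cast
  simp [Pi.star_apply, RCLike.star_def]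

lemma core_trig {n : ℕ} (θ p : Fin n → ℝ) (hp : ∀ j, 0 ≤ p j)
    (hsum : ∑ j, p j = 1) (hθ : ∀ j, |θ j| ≤ Real.pi / 2)
    (hc : ∑ j, p j * Real.cos (θ j) = 0) (hs : ∑ j, p j * Real.sin (θ j) = 0) :
    (∃ j, 0 < p j ∧ θ j = Real.pi / 2) ∧ (∃ k, 0 < p k ∧ θ k = -(Real.pi / 2)) := by
  have hcos : ∀ j, 0 ≤ Real.cos (θ j) := fun j =>
    Real.cos_nonneg_of_mem_Icc ⟨neg_le_of_abs_le (hθ j), le_of_abs_le (hθ j)⟩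
  have hterm : ∀ j ∈ Finset.univ, p j * Real.cos (θ j) = 0 := by
    rw [← Finset.sum_eq_zero_iff_of_nonneg (fun j _ => mul_nonneg (hp j) (hcos j))]
    exact hc
  have hpm : ∀ j, 0 < p j → θ j = Real.pi / 2 ∨ θ j = -(Real.pi / 2) := by
    intro j hj
    have h0 : Real.cos (θ j) = 0 := by
      have := hterm j (Finset.mem_univ j)
      rcases mul_eq_zero.mp this with h | h
      · exact absurd h (ne_of_gt hj)
      · exact h
    rcases Real.cos_eq_zero_iff.mp h0 with ⟨k, hk⟩
    have hpi := Real.pi_pos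
    have habs : |θ j| ≤ Real.pi / 2 := hθ j
    rw [hk, abs_div, abs_mul] at habs
    have h2 : |(2 * (k : ℝ) + 1)| * (|Real.pi| / |2|) ≤ Real.pi / 2 := by
      calc |(2 * (k : ℝ) + 1)| * (|Real.pi| / |2|) = |(2 * (k : ℝ) + 1)| * |Real.pi| / |2| := by
            ring
        _ ≤ Real.pi / 2 := habs
    rw [abs_of_pos hpi, abs_of_pos (by norm_num : (0:ℝ) < 2)] at h2
    have h3 : |(2 * (k : ℝ) + 1)| ≤ 1 := by
      have hd : 0 < Real.pi / 2 := by positivity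
      nlinarith [abs_nonneg (2 * (k : ℝ) + 1)]
    have h4 : (-1 : ℝ) ≤ 2 * (k : ℝ) + 1 := neg_le_of_abs_le h3
    have h5 : (2 * (k : ℝ) + 1) ≤ 1 := le_of_abs_le h3
    have hk0 : k = 0 ∨ k = -1 := by
      have : (-1 : ℝ) ≤ (k : ℝ) := by linarith
      have h6 : (k : ℝ) ≤ 0 := by linarith
      have := (by exact_mod_cast this : (-1 : ℤ) ≤ k)
      have := (by exact_mod_cast h6 : k ≤ (0 : ℤ))
      omega
    rcases hk0 with rfl | rfl
    · left; rw [hk]; push_cast; ring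
    · right; rw [hk]; push_cast; ring
  constructor
  · by_contra hno
    push_neg at hno
    have : ∀ j ∈ Finset.univ, p j * Real.sin (θ j) = -p j := by
      intro j _
      rcases eq_or_lt_of_le (hp j) with h | h
      · rw [← h]; ring
      · have hne := hno j h
        have := (hpm j h).resolve_left hne
        simp [this]
    rw [Finset.sum_congr rfl this, Finset.sum_neg_distrib, hsum] at hs
    norm_num at hs
  · by_contra hno
    push_neg at hno
    have : ∀ j ∈ Finset.univ, p j * Real.sin (θ j) = p j := by
      intro j _
      rcases eq_or_lt_of_le (hp j) with h | h
      · rw [← h]; ring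
      · have hne := hno j h
        have := (hpm j h).resolve_right hne
        simp [this]
    rw [Finset.sum_congr rfl this, hsum] at hs
    norm_num at hs

theorem min_orth_part1 {n : ℕ} (hn : 0 < n)
    (H : Matrix (Fin n) (Fin n) ℂ) (hH : H.IsHermitian) (ℏ : ℝ) (hℏ : 0 < ℏ)
    (t : ℝ) (ht : 0 < t)
    (hb : ∀ j, |hH.eigenvalues j * t / ℏ| ≤ Real.pi / 2)
    (ψ : Fin n → ℂ) (hψ : star ψ ⬝ᵥ ψ = 1)
    (horth : star ψ ⬝ᵥ (NormedSpace.exp ((-(Complex.I * (t / ℏ : ℝ))) • H)).mulVec ψ = 0) :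
    t ≥ Real.pi * ℏ / ((⨆ j, hH.eigenvalues j) - ⨅ j, hH.eigenvalues j) := by
  haveI : Nonempty (Fin n) := Fin.pos_iff_nonempty.mp hn
  set E := hH.eigenvalues with hE
  set θ : Fin n → ℝ := fun j => E j * t / ℏ with hθdef
  set p : Fin n → ℝ := fun j =>
    Complex.normSq ((star (hH.eigenvectorUnitary : Matrix (Fin n) (Fin n) ℂ)).mulVec ψ j) with hpdef
  set c : ℂ := -(Complex.I * (t / ℏ : ℝ)) with hcdef
  have hterm : ∀ j, Complex.exp (c * E j) =
      Complex.ofReal (Real.cos (θ j)) - Complex.ofReal (Real.sin (θ j)) * Complex.I := by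
    intro j
    rw [show c * (E j : ℂ) = ((-θ j : ℝ) : ℂ) * Complex.I by
        simp [hcdef, hθdef, Complex.ofReal_mul, Complex.ofReal_div, div_eq_mul_inv]; ring,
      Complex.exp_mul_I, Complex.ofReal_neg, Complex.cos_neg, Complex.sin_neg,
      ← Complex.ofReal_cos, ← Complex.ofReal_sin]
    ring
  have heq : ∑ j, Complex.exp (c * E j) * (p j : ℂ) = 0 := by
    rw [← quad_form H hH c ψ]; exact horth
  have hsum1 : ∑ j, p j = 1 := by
    have h1 : ∑ j, (p j : ℂ) = 1 := by rw [← norm_form H hH ψ]; exact hψ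
    have := congrArg Complex.re h1
    rw [Complex.re_sum] at this
    simpa using this
  have hre : ∑ j, p j * Real.cos (θ j) = 0 := by
    have := congrArg Complex.re heq
    rw [Complex.re_sum] at this
    simp only [hterm] at this
    simpa [mul_comm, Complex.cos_ofReal_re] using this
  have him : ∑ j, p j * Real.sin (θ j) = 0 := by
    have := congrArg Complex.im heq
    rw [Complex.im_sum] at this
    simp only [hterm, Complex.sub_im, Complex.mul_im, Complex.ofReal_re, Complex.ofReal_im,
      Complex.I_im, Complex.I_re, mul_zero, mul_one, zero_mul, sub_zero, add_zero, zero_add,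
      Complex.zero_im] at this
    have h3 : ∑ x, p x * Real.sin (θ x) = -∑ x, (0 - Real.sin (θ x)) * p x := by
      rw [← Finset.sum_neg_distrib]
      congr 1; ext x; ring
    rw [h3, this, neg_zero]
  have hp : ∀ j, 0 ≤ p j := fun j => Complex.normSq_nonneg _
  obtain ⟨⟨j, hj, hjθ⟩, ⟨k, hk, hkθ⟩⟩ := core_trig θ p hp hsum1 hb hre him
  have hne : ℏ ≠ 0 := ne_of_gt hℏ
  have hEj : E j = Real.pi * ℏ / (2 * t) := by
    have : E j * t / ℏ = Real.pi / 2 := hjθ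
    field_simp at this ⊢
    linarith
  have hEk : E k = -(Real.pi * ℏ / (2 * t)) := by
    have : E k * t / ℏ = -(Real.pi / 2) := hkθ
    field_simp at this ⊢
    linarith
  have hsup : E j ≤ ⨆ i, E i := le_ciSup (Set.Finite.bddAbove (Set.finite_range E)) j
  have hinf : (⨅ i, E i) ≤ E k := ciInf_le (Set.Finite.bddBelow (Set.finite_range E)) k
  have hgap : Real.pi * ℏ / t ≤ (⨆ i, E i) - ⨅ i, E i := by
    have : E j - E k = Real.pi * ℏ / t := by
      rw [hEj, hEk]; field_simp; ring
    linarith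
  have hgpos : 0 < (⨆ i, E i) - ⨅ i, E i := by
    have : 0 < Real.pi * ℏ / t := by positivity
    linarith
  rw [ge_iff_le, div_le_iff₀ hgpos]
  have h5 : Real.pi * ℏ / t * t ≤ ((⨆ i, E i) - ⨅ i, E i) * t :=
    mul_le_mul_of_nonneg_right hgap ht.le
  rw [div_mul_cancel₀ _ (ne_of_gt ht)] at h5
  linarith

theorem min_orth_part2 {n : ℕ} (hn : 0 < n)
    (H : Matrix (Fin n) (Fin n) ℂ) (hH : H.IsHermitian) (ℏ : ℝ) (hℏ : 0 < ℏ)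
    (hlt : (⨅ j, hH.eigenvalues j) < (⨆ j, hH.eigenvalues j)) :
    ∃ ψ : Fin n → ℂ, star ψ ⬝ᵥ ψ = 1 ∧
      star ψ ⬝ᵥ (NormedSpace.exp
        ((-(Complex.I * ((Real.pi * ℏ / ((⨆ j, hH.eigenvalues j) - ⨅ j, hH.eigenvalues j)) / ℏ : ℝ))) • H)).mulVec ψ = 0 := by
  haveI : Nonempty (Fin n) := Fin.pos_iff_nonempty.mp hn
  set E := hH.eigenvalues with hE
  set S : ℝ := ⨆ j, E j with hS
  set In : ℝ := ⨅ j, E j with hIn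
  obtain ⟨jmax, hjmax⟩ := exists_eq_ciSup_of_finite (f := E)
  obtain ⟨jmin, hjmin⟩ := exists_eq_ciInf_of_finite (f := E)
  have hjne : jmin ≠ jmax := by
    intro h
    rw [h] at hjmin
    have hlt' := hlt
    rw [hS, hIn] at hlt'
    rw [← hjmax, ← hjmin] at hlt'
    exact lt_irrefl _ hlt'
  set U : Matrix (Fin n) (Fin n) ℂ := (hH.eigenvectorUnitary : Matrix (Fin n) (Fin n) ℂ) with hU
  set c : ℂ := -(Complex.I * ((Real.pi * ℏ / (S - In)) / ℏ : ℝ)) with hc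
  set a : ℂ := (((Real.sqrt 2)⁻¹ : ℝ) : ℂ) with ha
  set φ : Fin n → ℂ := fun i => if i = jmax ∨ i = jmin then a else 0 with hφ
  refine ⟨U.mulVec φ, ?_, ?_⟩ <;>
  · have hφback : (star U).mulVec (U.mulVec φ) = φ := by
      rw [Matrix.mulVec_mulVec,
        show star U * U = 1 from Unitary.coe_star_mul_self hH.eigenvectorUnitary,
        Matrix.one_mulVec]
    have hnsq : ∀ j, (Complex.normSq (φ j) : ℝ) = if j = jmax ∨ j = jmin then (2 : ℝ)⁻¹ else 0 := by
      intro j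
      by_cases h : j = jmax ∨ j = jmin
      · rw [if_pos h]
        have hphi : φ j = a := by simp only [hφ]; rw [if_pos h]
        rw [hphi, ha, Complex.normSq_ofReal, ← Real.sqrt_inv]
        exact Real.mul_self_sqrt (by norm_num)
      · rw [if_neg h]
        have hphi : φ j = 0 := by simp only [hφ]; rw [if_neg h]
        rw [hphi]
        simp
    have hsubset : ∀ (f : Fin n → ℂ), (∀ x, x ∉ ({jmax, jmin} : Finset (Fin n)) → f x = 0) →
        ∑ j, f j = f jmax + f jmin := by
      intro f hf
      rw [← Finset.sum_subset (Finset.subset_univ ({jmax, jmin} : Finset (Fin n)))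
        (fun x _ hx => hf x hx)]
      exact Finset.sum_pair (Ne.symm hjne)
    first
    | · rw [norm_form H hH, hφback]
        rw [hsubset _ (by
          intro x hx
          simp only [Finset.mem_insert, Finset.mem_singleton] at hx
          push_neg at hx
          rw [hnsq x, if_neg (by tauto)]
          norm_num)]
        rw [hnsq jmax, hnsq jmin, if_pos (Or.inl rfl), if_pos (Or.inr rfl)]
        norm_num
    | · rw [quad_form H hH, hφback]
        rw [hsubset _ (by
          intro x hx
          simp only [Finset.mem_insert, Finset.mem_singleton] at hx
          push_neg at hx
          rw [hnsq x, if_neg (by tauto)]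
          norm_num)]
        rw [hnsq jmax, hnsq jmin, if_pos (Or.inl rfl), if_pos (Or.inr rfl)]
        have hSIn : S - In ≠ 0 := ne_of_gt (by linarith [hlt])
        have hr : ((Real.pi * ℏ / (S - In)) / ℏ) * (S - In) = Real.pi := by
          field_simp
        have hcS : c * (E jmax : ℂ) = c * (E jmin : ℂ) + -(Real.pi : ℂ) * Complex.I := by
          rw [hjmax, hjmin, ← hS, ← hIn]
          have h1 : c * (S : ℂ) - c * (In : ℂ) = -(Real.pi : ℂ) * Complex.I := by
            rw [← mul_sub, hc,
              show ((S : ℂ) - In) = ((S - In : ℝ) : ℂ) by push_cast; ring,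
              show -(Complex.I * (((Real.pi * ℏ / (S - In)) / ℏ : ℝ) : ℂ)) * ((S - In : ℝ) : ℂ)
                  = -((((Real.pi * ℏ / (S - In)) / ℏ) * (S - In) : ℝ) : ℂ) * Complex.I by
                push_cast; ring,
              hr]
          linear_combination h1
        rw [hcS, Complex.exp_add,
          show -(Real.pi : ℂ) * Complex.I = -((Real.pi : ℂ) * Complex.I) by ring,
          Complex.exp_neg, Complex.exp_pi_mul_I]
        push_cast
        ring

/-- minimum orthogonalization time: for `H` Hermitian with
extreme eigen-energies `E_max`, `E_min`, any unit vector `ψ` with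
`⟨ψ|exp(−iHt/ℏ)|ψ⟩ = 0` and `|E_j t/ℏ| ≤ π/2` for all `j` satisfies
`t ≥ πℏ/(E_max − E_min)`; equality is achievable (by an equal superposition of
the extreme-energy eigenvectors) when `E_min < E_max`. -/
theorem min_orthogonalization_time {n : ℕ} (hn : 0 < n)
    (H : Matrix (Fin n) (Fin n) ℂ) (hH : H.IsHermitian) (ℏ : ℝ) (hℏ : 0 < ℏ) :
    (∀ t : ℝ, 0 < t →
      (∀ j, |hH.eigenvalues j * t / ℏ| ≤ Real.pi / 2) →
      ∀ ψ : Fin n → ℂ, star ψ ⬝ᵥ ψ = 1 →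
        star ψ ⬝ᵥ (NormedSpace.exp ((-(Complex.I * (t / ℏ : ℝ))) • H)).mulVec ψ = 0 →
        t ≥ Real.pi * ℏ / ((⨆ j, hH.eigenvalues j) - ⨅ j, hH.eigenvalues j)) ∧
    ((⨅ j, hH.eigenvalues j) < (⨆ j, hH.eigenvalues j) →
      ∃ ψ : Fin n → ℂ, star ψ ⬝ᵥ ψ = 1 ∧
        star ψ ⬝ᵥ (NormedSpace.exp
          ((-(Complex.I * ((Real.pi * ℏ / ((⨆ j, hH.eigenvalues j) - ⨅ j, hH.eigenvalues j)) / ℏ : ℝ))) • H)).mulVec ψ = 0) := by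
  exact ⟨fun t ht hb ψ hψ horth => min_orth_part1 hn H hH ℏ hℏ t ht hb ψ hψ horth,
    fun hlt => min_orth_part2 hn H hH ℏ hℏ hlt⟩

end
end
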